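/- arXiv:1407.8068 — 5 statements merged into one kernel-verified Lean document; each statement's English description precedes it below -/
import Mathlib

section
/- For every integer n ≥ 2 and every integer i with 1 ≤ i ≤ n−1, the coefficient j_n(i) satisfies c_* · (n−1)^{H−1/2} · I_n(i) ≤ j_n(i) ≤ c_* · n^{H−1/2} · I_n(i), where c_* := σ·c_H and I_n(i) := ∫_{i−1}^{i} x^{1/2−H} · ((n−x)^{H−1/2} − (n−1−x)^{H−1/2}) dx. -/
open MeasureTheory

lemma integral_shift_rpow (h a : ℝ) (hh : 0 < h) :
    ∫ v in (0:ℝ)..1, (v + a) ^ (h - 1) = ((1 + a) ^ h - a ^ h) / h := by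
  have e := intervalIntegral.integral_comp_add_right (a := (0:ℝ)) (b := 1)
    (fun u => u ^ (h - 1)) a
  rw [e, zero_add, integral_rpow (Or.inl (by linarith)), show h - 1 + 1 = h by ring]

lemma key_bounds (h m a : ℝ) (hh : 0 < h) (hm : 0 ≤ m) (ha : 0 ≤ a) :
    m ^ h * ((1 + a) ^ h - a ^ h) ≤ h * ∫ v in (0:ℝ)..1, (v + m) ^ h * (v + a) ^ (h - 1) ∧
    h * (∫ v in (0:ℝ)..1, (v + m) ^ h * (v + a) ^ (h - 1)) ≤
      (m + 1) ^ h * ((1 + a) ^ h - a ^ h) := by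
  have hint_a : IntervalIntegrable (fun v => (v + a) ^ (h - 1)) volume 0 1 := by
    have := (intervalIntegral.intervalIntegrable_rpow' (a := a) (b := 1 + a)
      (r := h - 1) (by linarith)).comp_add_right a
    simpa using this
  have hcont : ContinuousOn (fun v : ℝ => (v + m) ^ h) (Set.uIcc (0:ℝ) 1) :=
    ContinuousOn.rpow_const (by fun_prop) (fun x _ => Or.inr hh.le)
  have hint : IntervalIntegrable (fun v => (v + m) ^ h * (v + a) ^ (h - 1)) volume 0 1 :=
    hint_a.continuousOn_mul hcont
  have hBA := integral_shift_rpow h a hh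
  have hlow : ∀ v ∈ Set.Icc (0:ℝ) 1,
      m ^ h * (v + a) ^ (h - 1) ≤ (v + m) ^ h * (v + a) ^ (h - 1) := fun v hv =>
    mul_le_mul_of_nonneg_right (Real.rpow_le_rpow hm (by linarith [hv.1]) hh.le)
      (Real.rpow_nonneg (by linarith [hv.1]) _)
  have hhigh : ∀ v ∈ Set.Icc (0:ℝ) 1,
      (v + m) ^ h * (v + a) ^ (h - 1) ≤ (m + 1) ^ h * (v + a) ^ (h - 1) := fun v hv =>
    mul_le_mul_of_nonneg_right (Real.rpow_le_rpow (by linarith [hv.1]) (by linarith [hv.2]) hh.le)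
      (Real.rpow_nonneg (by linarith [hv.1]) _)
  have h1 := intervalIntegral.integral_mono_on zero_le_one (hint_a.const_mul (m ^ h)) hint hlow
  have h2 := intervalIntegral.integral_mono_on zero_le_one hint
    (hint_a.const_mul ((m + 1) ^ h)) hhigh
  rw [intervalIntegral.integral_const_mul, hBA] at h1
  rw [intervalIntegral.integral_const_mul, hBA] at h2
  constructor
  · calc m ^ h * ((1 + a) ^ h - a ^ h)
        = h * (m ^ h * (((1 + a) ^ h - a ^ h) / h)) := by field_simp
      _ ≤ h * ∫ v in (0:ℝ)..1, (v + m) ^ h * (v + a) ^ (h - 1) :=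
        mul_le_mul_of_nonneg_left h1 hh.le
  · calc h * (∫ v in (0:ℝ)..1, (v + m) ^ h * (v + a) ^ (h - 1))
        ≤ h * ((m + 1) ^ h * (((1 + a) ^ h - a ^ h) / h)) := mul_le_mul_of_nonneg_left h2 hh.le
      _ = (m + 1) ^ h * ((1 + a) ^ h - a ^ h) := by field_simp


/-- The normalizing constant `c_H`. -/
noncomputable def cH (H : ℝ) : ℝ :=
  Real.sqrt (2 * H * Real.Gamma (3/2 - H) / (Real.Gamma (H + 1/2) * Real.Gamma (2 - 2*H)))

/-- The coefficient `j_n(i)` of the disturbed random walk. -/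
noncomputable def jn (H σ : ℝ) (n i : ℕ) : ℝ :=
  σ * cH H * (H - 1/2) *
    ∫ x in ((i : ℝ) - 1)..(i : ℝ),
      x ^ ((1:ℝ)/2 - H) *
        ∫ v in (0:ℝ)..1, (v + n - 1) ^ (H - 1/2) * (v + n - 1 - x) ^ (H - 3/2)

/-- `I_n(i) = ∫_{i-1}^{i} x^{1/2-H} ((n-x)^{H-1/2} - (n-1-x)^{H-1/2}) dx`. -/
noncomputable def In (H : ℝ) (n i : ℕ) : ℝ :=
  ∫ x in ((i : ℝ) - 1)..(i : ℝ),
    x ^ ((1:ℝ)/2 - H) * (((n : ℝ) - x) ^ (H - 1/2) - ((n : ℝ) - 1 - x) ^ (H - 1/2))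

/-- Lemma 2.6 (Lemma `ej1`): for `1 ≤ i ≤ n-1`,
`c_* (n-1)^{H-1/2} I_n(i) ≤ j_n(i) ≤ c_* n^{H-1/2} I_n(i)` where `c_* = σ c_H`. -/
theorem jn_bounds (H σ : ℝ) (hH : H ∈ Set.Ioo (1/2 : ℝ) 1) (hσ : 0 < σ)
    (n i : ℕ) (hn : 2 ≤ n) (hi : 1 ≤ i) (hi' : i ≤ n - 1) :
    σ * cH H * ((n : ℝ) - 1) ^ (H - 1/2) * In H n i ≤ jn H σ n i ∧
      jn H σ n i ≤ σ * cH H * (n : ℝ) ^ (H - 1/2) * In H n i := by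
  obtain ⟨hH1, hH2⟩ := hH
  have hh : 0 < H - 1/2 := by linarith
  have hs : (-1:ℝ) < 1/2 - H := by linarith
  have hc : 0 ≤ σ * cH H := mul_nonneg hσ.le (Real.sqrt_nonneg _)
  have hn2 : (2:ℝ) ≤ (n:ℝ) := by exact_mod_cast hn
  have hin : (i:ℝ) ≤ (n:ℝ) - 1 := by
    have h1 : i + 1 ≤ n := by omega
    have h2 : ((i:ℝ) + 1) ≤ (n:ℝ) := by exact_mod_cast h1
    linarith
  have hi1 : (1:ℝ) ≤ (i:ℝ) := by exact_mod_cast hi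
  have hle : (i:ℝ) - 1 ≤ (i:ℝ) := by linarith
  -- rewrite the inner integral to the shifted form
  have hFx : ∀ x : ℝ,
      (∫ v in (0:ℝ)..1, (v + n - 1) ^ (H - 1/2) * (v + n - 1 - x) ^ (H - 3/2)) =
      ∫ v in (0:ℝ)..1,
        (v + ((n:ℝ) - 1)) ^ (H - 1/2) * (v + ((n:ℝ) - 1 - x)) ^ ((H - 1/2) - 1) := by
    intro x
    apply intervalIntegral.integral_congr
    intro v _
    beta_reduce
    rw [show v + (n:ℝ) - 1 - x = v + ((n:ℝ) - 1 - x) by ring,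
        show v + (n:ℝ) - 1 = v + ((n:ℝ) - 1) by ring,
        show H - 3/2 = (H - 1/2) - 1 by ring]
  -- pointwise bounds from the key lemma
  have keyx : ∀ x ∈ Set.Icc ((i:ℝ) - 1) (i:ℝ),
      ((n:ℝ) - 1) ^ (H - 1/2) *
          (((n:ℝ) - x) ^ (H - 1/2) - ((n:ℝ) - 1 - x) ^ (H - 1/2)) ≤
        (H - 1/2) * ∫ v in (0:ℝ)..1, (v + n - 1) ^ (H - 1/2) * (v + n - 1 - x) ^ (H - 3/2) ∧
      (H - 1/2) * (∫ v in (0:ℝ)..1, (v + n - 1) ^ (H - 1/2) * (v + n - 1 - x) ^ (H - 3/2)) ≤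
        (n:ℝ) ^ (H - 1/2) * (((n:ℝ) - x) ^ (H - 1/2) - ((n:ℝ) - 1 - x) ^ (H - 1/2)) := by
    intro x hx
    have hax : 0 ≤ (n:ℝ) - 1 - x := by have := hx.2; linarith
    have hk := key_bounds (H - 1/2) ((n:ℝ) - 1) ((n:ℝ) - 1 - x) hh (by linarith) hax
    rw [show (1:ℝ) + ((n:ℝ) - 1 - x) = (n:ℝ) - x by ring,
        show ((n:ℝ) - 1) + 1 = (n:ℝ) by ring, ← hFx x] at hk
    exact hk
  -- measurability of the parametric integral
  have hmeasF : StronglyMeasurable fun x : ℝ =>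
      ∫ v in (0:ℝ)..1, (v + n - 1) ^ (H - 1/2) * (v + n - 1 - x) ^ (H - 3/2) := by
    have hk : StronglyMeasurable fun p : ℝ × ℝ =>
        ((p.2 : ℝ) + n - 1) ^ (H - 1/2) * ((p.2 : ℝ) + n - 1 - p.1) ^ (H - 3/2) := by
      apply Measurable.stronglyMeasurable; fun_prop
    have h2 := hk.integral_prod_right' (ν := volume.restrict (Set.Ioc (0:ℝ) 1))
    have heq : (fun x : ℝ =>
        ∫ v in (0:ℝ)..1, (v + n - 1) ^ (H - 1/2) * (v + n - 1 - x) ^ (H - 3/2)) =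
        fun x : ℝ => ∫ v, ((v : ℝ) + n - 1) ^ (H - 1/2) * ((v : ℝ) + n - 1 - x) ^ (H - 3/2)
          ∂(volume.restrict (Set.Ioc (0:ℝ) 1)) :=
      funext fun x => intervalIntegral.integral_of_le zero_le_one
    rw [heq]
    exact h2
  -- nonnegativity of the parametric integral
  have hFnonneg : ∀ x ∈ Set.Icc ((i:ℝ) - 1) (i:ℝ),
      0 ≤ ∫ v in (0:ℝ)..1, (v + n - 1) ^ (H - 1/2) * (v + n - 1 - x) ^ (H - 3/2) := by
    intro x hx
    apply intervalIntegral.integral_nonneg zero_le_one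
    intro v hv
    have := hx.2
    exact mul_nonneg (Real.rpow_nonneg (by linarith [hv.1]) _)
      (Real.rpow_nonneg (by linarith [hv.1]) _)
  -- integrability of the comparison functions
  have hGcont : ContinuousOn
      (fun x : ℝ => ((n:ℝ) - x) ^ (H - 1/2) - ((n:ℝ) - 1 - x) ^ (H - 1/2))
      (Set.uIcc ((i:ℝ) - 1) (i:ℝ)) := by
    apply ContinuousOn.sub
    · exact ContinuousOn.rpow_const (by fun_prop) (fun x _ => Or.inr hh.le)
    · exact ContinuousOn.rpow_const (by fun_prop) (fun x _ => Or.inr hh.le)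
  have hrpow_int : IntervalIntegrable (fun x : ℝ => x ^ ((1:ℝ)/2 - H))
      volume ((i:ℝ) - 1) (i:ℝ) := intervalIntegral.intervalIntegrable_rpow' hs
  have intBase : IntervalIntegrable (fun x : ℝ => x ^ ((1:ℝ)/2 - H) *
        (((n:ℝ) - x) ^ (H - 1/2) - ((n:ℝ) - 1 - x) ^ (H - 1/2)))
      volume ((i:ℝ) - 1) (i:ℝ) := hrpow_int.mul_continuousOn hGcont
  have intLo : IntervalIntegrable (fun x : ℝ => ((n:ℝ) - 1) ^ (H - 1/2) *
        (x ^ ((1:ℝ)/2 - H) * (((n:ℝ) - x) ^ (H - 1/2) - ((n:ℝ) - 1 - x) ^ (H - 1/2))))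
      volume ((i:ℝ) - 1) (i:ℝ) := by
    have := intBase.const_mul (((n:ℝ) - 1) ^ (H - 1/2))
    simpa [mul_assoc] using this
  have intHi : IntervalIntegrable (fun x : ℝ => ((n:ℝ)) ^ (H - 1/2) *
        (x ^ ((1:ℝ)/2 - H) * (((n:ℝ) - x) ^ (H - 1/2) - ((n:ℝ) - 1 - x) ^ (H - 1/2))))
      volume ((i:ℝ) - 1) (i:ℝ) := by
    have := intBase.const_mul (((n:ℝ)) ^ (H - 1/2))
    simpa [mul_assoc] using this
  have intMid : IntervalIntegrable (fun x : ℝ => (H - 1/2) * (x ^ ((1:ℝ)/2 - H) *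
        ∫ v in (0:ℝ)..1, (v + n - 1) ^ (H - 1/2) * (v + n - 1 - x) ^ (H - 3/2)))
      volume ((i:ℝ) - 1) (i:ℝ) := by
    rw [intervalIntegrable_iff_integrableOn_Ioc_of_le hle]
    have hHiInt := (intervalIntegrable_iff_integrableOn_Ioc_of_le hle).1 intHi
    apply Integrable.mono' hHiInt
    · have hxs : Measurable fun x : ℝ => x ^ ((1:ℝ)/2 - H) := by fun_prop
      exact (measurable_const.mul (hxs.mul hmeasF.measurable)).aestronglyMeasurable
    · rw [ae_restrict_iff' measurableSet_Ioc]
      refine ae_of_all _ fun x hx => ?_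
      have hx' : x ∈ Set.Icc ((i:ℝ) - 1) (i:ℝ) := Set.Ioc_subset_Icc_self hx
      have h0F := hFnonneg x hx'
      have hx0 : (0:ℝ) ≤ x := by have := hx'.1; linarith
      rw [Real.norm_eq_abs, abs_of_nonneg
        (mul_nonneg hh.le (mul_nonneg (Real.rpow_nonneg hx0 _) h0F))]
      have hk := (keyx x hx').2
      calc (H - 1/2) * (x ^ ((1:ℝ)/2 - H) *
            ∫ v in (0:ℝ)..1, (v + n - 1) ^ (H - 1/2) * (v + n - 1 - x) ^ (H - 3/2))
          = x ^ ((1:ℝ)/2 - H) * ((H - 1/2) *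
            ∫ v in (0:ℝ)..1, (v + n - 1) ^ (H - 1/2) * (v + n - 1 - x) ^ (H - 3/2)) := by ring
        _ ≤ x ^ ((1:ℝ)/2 - H) * ((n:ℝ) ^ (H - 1/2) *
            (((n:ℝ) - x) ^ (H - 1/2) - ((n:ℝ) - 1 - x) ^ (H - 1/2))) :=
          mul_le_mul_of_nonneg_left hk (Real.rpow_nonneg hx0 _)
        _ = (n:ℝ) ^ (H - 1/2) * (x ^ ((1:ℝ)/2 - H) *
            (((n:ℝ) - x) ^ (H - 1/2) - ((n:ℝ) - 1 - x) ^ (H - 1/2))) := by ring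
  -- core inequalities
  have core1 : ((n:ℝ) - 1) ^ (H - 1/2) * In H n i ≤
      (H - 1/2) * ∫ x in ((i:ℝ) - 1)..(i:ℝ), x ^ ((1:ℝ)/2 - H) *
        ∫ v in (0:ℝ)..1, (v + n - 1) ^ (H - 1/2) * (v + n - 1 - x) ^ (H - 3/2) := by
    rw [In, ← intervalIntegral.integral_const_mul, ← intervalIntegral.integral_const_mul]
    apply intervalIntegral.integral_mono_on hle intLo intMid
    intro x hx
    have hx0 : (0:ℝ) ≤ x := by have := hx.1; linarith
    have hk := (keyx x hx).1
    calc ((n:ℝ) - 1) ^ (H - 1/2) * (x ^ ((1:ℝ)/2 - H) *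
          (((n:ℝ) - x) ^ (H - 1/2) - ((n:ℝ) - 1 - x) ^ (H - 1/2)))
        = x ^ ((1:ℝ)/2 - H) * (((n:ℝ) - 1) ^ (H - 1/2) *
          (((n:ℝ) - x) ^ (H - 1/2) - ((n:ℝ) - 1 - x) ^ (H - 1/2))) := by ring
      _ ≤ x ^ ((1:ℝ)/2 - H) * ((H - 1/2) *
          ∫ v in (0:ℝ)..1, (v + n - 1) ^ (H - 1/2) * (v + n - 1 - x) ^ (H - 3/2)) :=
        mul_le_mul_of_nonneg_left hk (Real.rpow_nonneg hx0 _)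
      _ = (H - 1/2) * (x ^ ((1:ℝ)/2 - H) *
          ∫ v in (0:ℝ)..1, (v + n - 1) ^ (H - 1/2) * (v + n - 1 - x) ^ (H - 3/2)) := by ring
  have core2 : (H - 1/2) * (∫ x in ((i:ℝ) - 1)..(i:ℝ), x ^ ((1:ℝ)/2 - H) *
        ∫ v in (0:ℝ)..1, (v + n - 1) ^ (H - 1/2) * (v + n - 1 - x) ^ (H - 3/2)) ≤
      (n:ℝ) ^ (H - 1/2) * In H n i := by
    rw [In, ← intervalIntegral.integral_const_mul, ← intervalIntegral.integral_const_mul]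
    apply intervalIntegral.integral_mono_on hle intMid intHi
    intro x hx
    have hx0 : (0:ℝ) ≤ x := by have := hx.1; linarith
    have hk := (keyx x hx).2
    calc (H - 1/2) * (x ^ ((1:ℝ)/2 - H) *
          ∫ v in (0:ℝ)..1, (v + n - 1) ^ (H - 1/2) * (v + n - 1 - x) ^ (H - 3/2))
        = x ^ ((1:ℝ)/2 - H) * ((H - 1/2) *
          ∫ v in (0:ℝ)..1, (v + n - 1) ^ (H - 1/2) * (v + n - 1 - x) ^ (H - 3/2)) := by ring
      _ ≤ x ^ ((1:ℝ)/2 - H) * ((n:ℝ) ^ (H - 1/2) *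
          (((n:ℝ) - x) ^ (H - 1/2) - ((n:ℝ) - 1 - x) ^ (H - 1/2))) :=
        mul_le_mul_of_nonneg_left hk (Real.rpow_nonneg hx0 _)
      _ = (n:ℝ) ^ (H - 1/2) * (x ^ ((1:ℝ)/2 - H) *
          (((n:ℝ) - x) ^ (H - 1/2) - ((n:ℝ) - 1 - x) ^ (H - 1/2))) := by ring
  constructor
  · calc σ * cH H * ((n:ℝ) - 1) ^ (H - 1/2) * In H n i
        = (σ * cH H) * (((n:ℝ) - 1) ^ (H - 1/2) * In H n i) := by ring
      _ ≤ (σ * cH H) * ((H - 1/2) * ∫ x in ((i:ℝ) - 1)..(i:ℝ), x ^ ((1:ℝ)/2 - H) *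
          ∫ v in (0:ℝ)..1, (v + n - 1) ^ (H - 1/2) * (v + n - 1 - x) ^ (H - 3/2)) :=
        mul_le_mul_of_nonneg_left core1 hc
      _ = jn H σ n i := by rw [jn]; ring
  · calc jn H σ n i
        = (σ * cH H) * ((H - 1/2) * ∫ x in ((i:ℝ) - 1)..(i:ℝ), x ^ ((1:ℝ)/2 - H) *
          ∫ v in (0:ℝ)..1, (v + n - 1) ^ (H - 1/2) * (v + n - 1 - x) ^ (H - 3/2)) := by
          rw [jn]; ring
      _ ≤ (σ * cH H) * ((n:ℝ) ^ (H - 1/2) * In H n i) :=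
        mul_le_mul_of_nonneg_left core2 hc
      _ = σ * cH H * (n:ℝ) ^ (H - 1/2) * In H n i := by ring
end

section
/- For every integer n ≥ 2 one has g ≤ g_n ≤ g·(1 + 1/(n−1))^{H−1/2} ≤ g·2^{H−1/2}, where g := σ·c_H/(H+1/2). In particular g_n → g as n → ∞. -/
open MeasureTheory

/-- The coefficient `g_n` of the disturbed random walk. -/
noncomputable def gn (H σ : ℝ) (n : ℕ) : ℝ :=
  σ * cH H * (H - 1/2) *
    ∫ x in ((n : ℝ) - 1)..(n : ℝ),
      x ^ ((1:ℝ)/2 - H) * ((n : ℝ) - x) ^ (H - 1/2) *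
        ∫ y in (0:ℝ)..1, (y * ((n : ℝ) - x) + x) ^ (H - 1/2) * y ^ (H - 3/2)

section aux

variable {H : ℝ}

private lemma intY (hH : H ∈ Set.Ioo (1/2 : ℝ) 1) :
    (∫ y in (0:ℝ)..1, y ^ (H - 3/2)) = 1 / (H - 1/2) := by
  rw [integral_rpow (Or.inl (by linarith [hH.1]))]
  have he : H - 3/2 + 1 = H - 1/2 := by ring
  rw [he, Real.one_rpow, Real.zero_rpow (by intro h; nlinarith [hH.1]), sub_zero]

/-- inner integrand is interval integrable for `0 ≤ x ≤ N` -/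
private lemma innerIntble (hH : H ∈ Set.Ioo (1/2 : ℝ) 1) {N x : ℝ} (hx0 : 0 ≤ x) (hxN : x ≤ N) :
    IntervalIntegrable (fun y => (y * (N - x) + x) ^ (H - 1/2) * y ^ (H - 3/2)) volume 0 1 := by
  have hb : IntervalIntegrable (fun y : ℝ => N ^ (H - 1/2) * y ^ (H - 3/2)) volume 0 1 :=
    (intervalIntegral.intervalIntegrable_rpow' (by linarith [hH.1])).const_mul _
  have hm : Measurable (fun y : ℝ => (y * (N - x) + x) ^ (H - 1/2) * y ^ (H - 3/2)) := by
    fun_prop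
  refine hb.mono_fun' hm.aestronglyMeasurable ?_
  rw [Set.uIoc_of_le (zero_le_one (α := ℝ))]
  filter_upwards [ae_restrict_mem measurableSet_Ioc] with y hy
  have hy0 : 0 < y := hy.1
  have hy1 : y ≤ 1 := hy.2
  have hbase0 : 0 ≤ y * (N - x) + x := by nlinarith
  have hbaseN : y * (N - x) + x ≤ N := by nlinarith
  have h2 : 0 ≤ y ^ (H - 3/2) := Real.rpow_nonneg hy0.le _
  simp only [norm_mul, Real.norm_of_nonneg (Real.rpow_nonneg hbase0 _),
    Real.norm_of_nonneg h2]
  exact mul_le_mul_of_nonneg_right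
    (Real.rpow_le_rpow hbase0 hbaseN (by linarith [hH.1])) h2

private lemma inner_ge (hH : H ∈ Set.Ioo (1/2 : ℝ) 1) {N x : ℝ} (hx0 : 0 ≤ x) (hxN : x ≤ N) :
    x ^ (H - 1/2) / (H - 1/2)
      ≤ ∫ y in (0:ℝ)..1, (y * (N - x) + x) ^ (H - 1/2) * y ^ (H - 3/2) := by
  have key : (∫ y in (0:ℝ)..1, x ^ (H - 1/2) * y ^ (H - 3/2))
      ≤ ∫ y in (0:ℝ)..1, (y * (N - x) + x) ^ (H - 1/2) * y ^ (H - 3/2) := by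
    refine intervalIntegral.integral_mono_on zero_le_one
      ((intervalIntegral.intervalIntegrable_rpow' (by linarith [hH.1])).const_mul _)
      (innerIntble hH hx0 hxN) ?_
    intro y hy
    have hy0 : 0 ≤ y := hy.1
    refine mul_le_mul_of_nonneg_right ?_ (Real.rpow_nonneg hy0 _)
    exact Real.rpow_le_rpow hx0 (by nlinarith [hy.1, sub_nonneg.mpr hxN]) (by linarith [hH.1])
  calc x ^ (H - 1/2) / (H - 1/2)
      = ∫ y in (0:ℝ)..1, x ^ (H - 1/2) * y ^ (H - 3/2) := by
        rw [intervalIntegral.integral_const_mul, intY hH]; ring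
    _ ≤ _ := key

private lemma inner_le (hH : H ∈ Set.Ioo (1/2 : ℝ) 1) {N x : ℝ} (hx0 : 0 ≤ x) (hxN : x ≤ N) :
    (∫ y in (0:ℝ)..1, (y * (N - x) + x) ^ (H - 1/2) * y ^ (H - 3/2))
      ≤ N ^ (H - 1/2) / (H - 1/2) := by
  have key : (∫ y in (0:ℝ)..1, (y * (N - x) + x) ^ (H - 1/2) * y ^ (H - 3/2))
      ≤ ∫ y in (0:ℝ)..1, N ^ (H - 1/2) * y ^ (H - 3/2) := by
    refine intervalIntegral.integral_mono_on zero_le_one (innerIntble hH hx0 hxN)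
      ((intervalIntegral.intervalIntegrable_rpow' (by linarith [hH.1])).const_mul _) ?_
    intro y hy
    have hbase0 : 0 ≤ y * (N - x) + x := by nlinarith [hy.1, sub_nonneg.mpr hxN]
    refine mul_le_mul_of_nonneg_right ?_ (Real.rpow_nonneg hy.1 _)
    exact Real.rpow_le_rpow hbase0 (by nlinarith [hy.1, hy.2, sub_nonneg.mpr hxN])
      (by linarith [hH.1])
  calc _ ≤ ∫ y in (0:ℝ)..1, N ^ (H - 1/2) * y ^ (H - 3/2) := key
    _ = N ^ (H - 1/2) / (H - 1/2) := by
        rw [intervalIntegral.integral_const_mul, intY hH]; ring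

private lemma inner_nonneg (hH : H ∈ Set.Ioo (1/2 : ℝ) 1) {N x : ℝ} (hx0 : 0 ≤ x) (hxN : x ≤ N) :
    0 ≤ ∫ y in (0:ℝ)..1, (y * (N - x) + x) ^ (H - 1/2) * y ^ (H - 3/2) := by
  refine intervalIntegral.integral_nonneg zero_le_one fun y hy => ?_
  exact mul_nonneg (Real.rpow_nonneg (by nlinarith [hy.1, sub_nonneg.mpr hxN]) _)
    (Real.rpow_nonneg hy.1 _)

/-- measurability of the inner integral as a function of `x` -/
private lemma meas_inner (N : ℝ) :
    StronglyMeasurable (fun x : ℝ =>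
      ∫ y in (0:ℝ)..1, (y * (N - x) + x) ^ (H - 1/2) * y ^ (H - 3/2)) := by
  have h : ∀ x : ℝ, (∫ y in (0:ℝ)..1, (y * (N - x) + x) ^ (H - 1/2) * y ^ (H - 3/2))
      = ∫ y, (fun z : ℝ × ℝ => (z.2 * (N - z.1) + z.1) ^ (H - 1/2) * z.2 ^ (H - 3/2)) (x, y)
          ∂(volume.restrict (Set.Ioc (0:ℝ) 1)) := fun x =>
    intervalIntegral.integral_of_le zero_le_one
  simp_rw [h]
  have hm : Measurable (fun z : ℝ × ℝ =>
      (z.2 * (N - z.1) + z.1) ^ (H - 1/2) * z.2 ^ (H - 3/2)) := by fun_prop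
  exact hm.stronglyMeasurable.integral_prod_right'

/-- the outer integrand -/
private lemma outer_intble (hH : H ∈ Set.Ioo (1/2 : ℝ) 1) {N : ℝ} (hN : 2 ≤ N) :
    IntervalIntegrable (fun x => x ^ ((1:ℝ)/2 - H) * (N - x) ^ (H - 1/2) *
      ∫ y in (0:ℝ)..1, (y * (N - x) + x) ^ (H - 1/2) * y ^ (H - 3/2)) volume (N - 1) N := by
  set C : ℝ := (N - 1) ^ ((1:ℝ)/2 - H) * N ^ (H - 1/2) / (H - 1/2) with hC
  have hb : IntervalIntegrable (fun x : ℝ => C * (N - x) ^ (H - 1/2)) volume (N - 1) N := by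
    refine ContinuousOn.intervalIntegrable ?_
    exact (continuousOn_const.mul ((continuous_const.sub continuous_id).comp_continuousOn'
      continuousOn_id |>.rpow_const fun x _ => Or.inr (by linarith [hH.1])))
  refine hb.mono_fun' ?_ ?_
  · exact (((Measurable.mul (by fun_prop) (by fun_prop)).mul
      (meas_inner N).measurable)).aestronglyMeasurable
  · rw [Set.uIoc_of_le (by linarith : N - 1 ≤ N)]
    filter_upwards [ae_restrict_mem measurableSet_Ioc] with x hx
    have hx1 : 1 ≤ x := by linarith [hx.1]
    have hx0 : (0:ℝ) ≤ x := by linarith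
    have hxN : x ≤ N := hx.2
    have hI0 := inner_nonneg hH hx0 hxN
    have hIle := inner_le hH hx0 hxN
    have hNx : 0 ≤ N - x := by linarith
    have hfnn : 0 ≤ x ^ ((1:ℝ)/2 - H) * (N - x) ^ (H - 1/2) *
        ∫ y in (0:ℝ)..1, (y * (N - x) + x) ^ (H - 1/2) * y ^ (H - 3/2) :=
      mul_nonneg (mul_nonneg (Real.rpow_nonneg hx0 _) (Real.rpow_nonneg hNx _)) hI0
    rw [Real.norm_of_nonneg hfnn, hC]
    have h1 : x ^ ((1:ℝ)/2 - H) ≤ (N - 1) ^ ((1:ℝ)/2 - H) :=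
      Real.rpow_le_rpow_of_nonpos (by linarith) hx.1.le (by linarith [hH.1])
    calc x ^ ((1:ℝ)/2 - H) * (N - x) ^ (H - 1/2) *
          (∫ y in (0:ℝ)..1, (y * (N - x) + x) ^ (H - 1/2) * y ^ (H - 3/2))
        ≤ x ^ ((1:ℝ)/2 - H) * (N - x) ^ (H - 1/2) * (N ^ (H - 1/2) / (H - 1/2)) :=
          mul_le_mul_of_nonneg_left hIle
            (mul_nonneg (Real.rpow_nonneg hx0 _) (Real.rpow_nonneg hNx _))
      _ ≤ (N - 1) ^ ((1:ℝ)/2 - H) * (N - x) ^ (H - 1/2) * (N ^ (H - 1/2) / (H - 1/2)) := by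
          refine mul_le_mul_of_nonneg_right (mul_le_mul_of_nonneg_right h1
            (Real.rpow_nonneg hNx _)) ?_
          exact div_nonneg (Real.rpow_nonneg (by linarith) _) (by linarith [hH.1])
      _ = (N - 1) ^ ((1:ℝ)/2 - H) * N ^ (H - 1/2) / (H - 1/2) * (N - x) ^ (H - 1/2) := by
          ring

private lemma intX (hH : H ∈ Set.Ioo (1/2 : ℝ) 1) (N : ℝ) :
    (∫ x in (N - 1)..N, (N - x) ^ (H - 1/2)) = 1 / (H + 1/2) := by
  have := intervalIntegral.integral_comp_sub_left
    (a := N - 1) (b := N) (fun t : ℝ => t ^ (H - 1/2)) N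
  rw [this]
  have h1 : N - N = 0 := by ring
  have h2 : N - (N - 1) = 1 := by ring
  rw [h1, h2, integral_rpow (Or.inl (by linarith [hH.1]))]
  have he : H - 1/2 + 1 = H + 1/2 := by ring
  rw [he, Real.one_rpow, Real.zero_rpow (by intro h; nlinarith [hH.1]), sub_zero]

private lemma lo_intble (hH : H ∈ Set.Ioo (1/2 : ℝ) 1) (N : ℝ) :
    IntervalIntegrable (fun x : ℝ => 1 / (H - 1/2) * (N - x) ^ (H - 1/2)) volume (N - 1) N := by
  refine ContinuousOn.intervalIntegrable ?_
  exact continuousOn_const.mul ((continuous_const.sub continuous_id).comp_continuousOn'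
    continuousOn_id |>.rpow_const fun x _ => Or.inr (by linarith [hH.1]))

private lemma outer_ge (hH : H ∈ Set.Ioo (1/2 : ℝ) 1) {N : ℝ} (hN : 2 ≤ N) :
    1 / (H - 1/2) * (1 / (H + 1/2))
      ≤ ∫ x in (N - 1)..N, x ^ ((1:ℝ)/2 - H) * (N - x) ^ (H - 1/2) *
          ∫ y in (0:ℝ)..1, (y * (N - x) + x) ^ (H - 1/2) * y ^ (H - 3/2) := by
  have key : (∫ x in (N - 1)..N, 1 / (H - 1/2) * (N - x) ^ (H - 1/2))
      ≤ ∫ x in (N - 1)..N, x ^ ((1:ℝ)/2 - H) * (N - x) ^ (H - 1/2) *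
          ∫ y in (0:ℝ)..1, (y * (N - x) + x) ^ (H - 1/2) * y ^ (H - 3/2) := by
    refine intervalIntegral.integral_mono_on (by linarith) (lo_intble hH N)
      (outer_intble hH hN) ?_
    intro x hx
    have hx1 : 1 ≤ x := by linarith [hx.1]
    have hx0 : (0:ℝ) < x := by linarith
    have hxN : x ≤ N := hx.2
    have hNx : 0 ≤ N - x := by linarith
    have hxe : x ^ ((1:ℝ)/2 - H) * x ^ (H - 1/2) = 1 := by
      rw [← Real.rpow_add hx0]; norm_num
    calc 1 / (H - 1/2) * (N - x) ^ (H - 1/2)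
        = x ^ ((1:ℝ)/2 - H) * (N - x) ^ (H - 1/2) * (x ^ (H - 1/2) / (H - 1/2)) := by
          rw [show x ^ ((1:ℝ)/2 - H) * (N - x) ^ (H - 1/2) * (x ^ (H - 1/2) / (H - 1/2))
              = x ^ ((1:ℝ)/2 - H) * x ^ (H - 1/2) * ((N - x) ^ (H - 1/2) * (1 / (H - 1/2)))
              from by ring, hxe]
          ring
      _ ≤ x ^ ((1:ℝ)/2 - H) * (N - x) ^ (H - 1/2) *
            ∫ y in (0:ℝ)..1, (y * (N - x) + x) ^ (H - 1/2) * y ^ (H - 3/2) :=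
          mul_le_mul_of_nonneg_left (inner_ge hH hx0.le hxN)
            (mul_nonneg (Real.rpow_nonneg hx0.le _) (Real.rpow_nonneg hNx _))
  calc 1 / (H - 1/2) * (1 / (H + 1/2))
      = ∫ x in (N - 1)..N, 1 / (H - 1/2) * (N - x) ^ (H - 1/2) := by
        rw [intervalIntegral.integral_const_mul, intX hH]
    _ ≤ _ := key

private lemma outer_le (hH : H ∈ Set.Ioo (1/2 : ℝ) 1) {N : ℝ} (hN : 2 ≤ N) :
    (∫ x in (N - 1)..N, x ^ ((1:ℝ)/2 - H) * (N - x) ^ (H - 1/2) *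
        ∫ y in (0:ℝ)..1, (y * (N - x) + x) ^ (H - 1/2) * y ^ (H - 3/2))
      ≤ (N - 1) ^ ((1:ℝ)/2 - H) * N ^ (H - 1/2) / (H - 1/2) * (1 / (H + 1/2)) := by
  set C : ℝ := (N - 1) ^ ((1:ℝ)/2 - H) * N ^ (H - 1/2) / (H - 1/2) with hC
  have hCnn : 0 ≤ C :=
    div_nonneg (mul_nonneg (Real.rpow_nonneg (by linarith) _)
      (Real.rpow_nonneg (by linarith) _)) (by linarith [hH.1])
  have hbint : IntervalIntegrable (fun x : ℝ => C * (N - x) ^ (H - 1/2)) volume (N - 1) N := by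
    refine ContinuousOn.intervalIntegrable ?_
    exact continuousOn_const.mul ((continuous_const.sub continuous_id).comp_continuousOn'
      continuousOn_id |>.rpow_const fun x _ => Or.inr (by linarith [hH.1]))
  have key : (∫ x in (N - 1)..N, x ^ ((1:ℝ)/2 - H) * (N - x) ^ (H - 1/2) *
      ∫ y in (0:ℝ)..1, (y * (N - x) + x) ^ (H - 1/2) * y ^ (H - 3/2))
      ≤ ∫ x in (N - 1)..N, C * (N - x) ^ (H - 1/2) := by
    refine intervalIntegral.integral_mono_on (by linarith) (outer_intble hH hN) hbint ?_
    intro x hx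
    have hx1 : 1 ≤ x := by linarith [hx.1]
    have hx0 : (0:ℝ) ≤ x := by linarith
    have hxN : x ≤ N := hx.2
    have hNx : 0 ≤ N - x := by linarith
    have h1 : x ^ ((1:ℝ)/2 - H) ≤ (N - 1) ^ ((1:ℝ)/2 - H) :=
      Real.rpow_le_rpow_of_nonpos (by linarith) hx.1 (by linarith [hH.1])
    calc x ^ ((1:ℝ)/2 - H) * (N - x) ^ (H - 1/2) *
          (∫ y in (0:ℝ)..1, (y * (N - x) + x) ^ (H - 1/2) * y ^ (H - 3/2))
        ≤ x ^ ((1:ℝ)/2 - H) * (N - x) ^ (H - 1/2) * (N ^ (H - 1/2) / (H - 1/2)) :=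
          mul_le_mul_of_nonneg_left (inner_le hH hx0 hxN)
            (mul_nonneg (Real.rpow_nonneg hx0 _) (Real.rpow_nonneg hNx _))
      _ ≤ (N - 1) ^ ((1:ℝ)/2 - H) * (N - x) ^ (H - 1/2) * (N ^ (H - 1/2) / (H - 1/2)) := by
          refine mul_le_mul_of_nonneg_right (mul_le_mul_of_nonneg_right h1
            (Real.rpow_nonneg hNx _)) ?_
          exact div_nonneg (Real.rpow_nonneg (by linarith) _) (by linarith [hH.1])
      _ = C * (N - x) ^ (H - 1/2) := by rw [hC]; ring
  calc _ ≤ ∫ x in (N - 1)..N, C * (N - x) ^ (H - 1/2) := key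
    _ = C * (1 / (H + 1/2)) := by rw [intervalIntegral.integral_const_mul, intX hH]

private lemma cH_pos (hH : H ∈ Set.Ioo (1/2 : ℝ) 1) : 0 < cH H := by
  obtain ⟨h1, h2⟩ := hH
  apply Real.sqrt_pos.mpr
  apply div_pos
  · exact mul_pos (by linarith) (Real.Gamma_pos_of_pos (by linarith))
  · exact mul_pos (Real.Gamma_pos_of_pos (by linarith)) (Real.Gamma_pos_of_pos (by linarith))

end aux

/-- Lemma 2.7 (Lemma `eg1`): with `g := σ c_H / (H + 1/2)`, for all `n ≥ 2`,
`g ≤ g_n ≤ g (1 + 1/(n-1))^{H-1/2} ≤ g 2^{H-1/2}`; in particular `g_n → g`. -/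
theorem gn_bounds (H σ : ℝ) (hH : H ∈ Set.Ioo (1/2 : ℝ) 1) (hσ : 0 < σ) :
    (∀ n : ℕ, 2 ≤ n →
      σ * cH H / (H + 1/2) ≤ gn H σ n ∧
      gn H σ n ≤ σ * cH H / (H + 1/2) * (1 + 1 / ((n : ℝ) - 1)) ^ (H - 1/2) ∧
      σ * cH H / (H + 1/2) * (1 + 1 / ((n : ℝ) - 1)) ^ (H - 1/2) ≤
        σ * cH H / (H + 1/2) * (2 : ℝ) ^ (H - 1/2)) ∧
    Filter.Tendsto (gn H σ) Filter.atTop (nhds (σ * cH H / (H + 1/2))) := by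
  obtain ⟨h1, h2⟩ := hH
  have hp : (0:ℝ) < H - 1/2 := by linarith
  have hq : (0:ℝ) < H + 1/2 := by linarith
  have hc : 0 < cH H := cH_pos ⟨h1, h2⟩
  have hp' : H - 1/2 ≠ 0 := ne_of_gt hp
  have hq' : H + 1/2 ≠ 0 := ne_of_gt hq
  have hK : 0 < σ * cH H * (H - 1/2) := by positivity
  have hg : 0 < σ * cH H / (H + 1/2) := by positivity
  have main : ∀ n : ℕ, 2 ≤ n →
      σ * cH H / (H + 1/2) ≤ gn H σ n ∧
      gn H σ n ≤ σ * cH H / (H + 1/2) * (1 + 1 / ((n : ℝ) - 1)) ^ (H - 1/2) ∧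
      σ * cH H / (H + 1/2) * (1 + 1 / ((n : ℝ) - 1)) ^ (H - 1/2) ≤
        σ * cH H / (H + 1/2) * (2 : ℝ) ^ (H - 1/2) := by
    intro n hn
    have hN : (2:ℝ) ≤ (n:ℝ) := by exact_mod_cast hn
    have hN1 : (1:ℝ) ≤ (n:ℝ) - 1 := by linarith
    have hN1' : (0:ℝ) < (n:ℝ) - 1 := by linarith
    constructor
    · -- lower bound
      have h := outer_ge ⟨h1, h2⟩ hN
      unfold gn
      calc σ * cH H / (H + 1/2)
          = σ * cH H * (H - 1/2) * (1 / (H - 1/2) * (1 / (H + 1/2))) := by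
            have e : (H - 1/2) * (1 / (H - 1/2) * (1 / (H + 1/2))) = 1 / (H + 1/2) := by
              rw [← mul_assoc, mul_one_div, mul_one_div, div_self hp']
            rw [mul_assoc, e, mul_one_div]
        _ ≤ σ * cH H * (H - 1/2) * _ := mul_le_mul_of_nonneg_left h hK.le
    constructor
    · -- upper bound
      have h := outer_le ⟨h1, h2⟩ hN
      have hrw : ((n:ℝ) - 1) ^ ((1:ℝ)/2 - H) * (n:ℝ) ^ (H - 1/2)
          = (1 + 1 / ((n:ℝ) - 1)) ^ (H - 1/2) := by
        have e1 : 1 + 1 / ((n:ℝ) - 1) = (n:ℝ) / ((n:ℝ) - 1) := by field_simp; ring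
        rw [e1, Real.div_rpow (by linarith) (by linarith)]
        rw [show ((1:ℝ)/2 - H) = -(H - 1/2) by ring, Real.rpow_neg hN1'.le]
        field_simp
      unfold gn
      calc σ * cH H * (H - 1/2) * _
          ≤ σ * cH H * (H - 1/2) *
            (((n:ℝ) - 1) ^ ((1:ℝ)/2 - H) * (n:ℝ) ^ (H - 1/2) / (H - 1/2) * (1 / (H + 1/2))) :=
            mul_le_mul_of_nonneg_left h hK.le
        _ = σ * cH H / (H + 1/2) * (1 + 1 / ((n : ℝ) - 1)) ^ (H - 1/2) := by
            rw [← hrw]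
            have e : ∀ B : ℝ, σ * cH H * (H - 1/2) * (B / (H - 1/2) * (1 / (H + 1/2)))
                = σ * cH H / (H + 1/2) * B := by
              intro B
              have hpp : (H - 1/2) * (H - 1/2)⁻¹ = 1 := mul_inv_cancel₀ hp'
              calc σ * cH H * (H - 1/2) * (B / (H - 1/2) * (1 / (H + 1/2)))
                  = σ * cH H * (1 / (H + 1/2)) * B * ((H - 1/2) * (H - 1/2)⁻¹) := by
                    rw [div_eq_mul_inv]; ring
                _ = σ * cH H / (H + 1/2) * B := by rw [hpp, mul_one, mul_one_div]
            exact e _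
    · -- comparison with 2^(H-1/2)
      refine mul_le_mul_of_nonneg_left ?_ hg.le
      refine Real.rpow_le_rpow (by positivity) ?_ hp.le
      have : 1 / ((n:ℝ) - 1) ≤ 1 := by
        rw [div_le_one hN1']; linarith
      linarith
  refine ⟨main, ?_⟩
  -- limit
  have t0 : Filter.Tendsto (fun n : ℕ => 1 + 1 / ((n:ℝ) - 1)) Filter.atTop (nhds 1) := by
    have h1' : Filter.Tendsto (fun n : ℕ => (n:ℝ) - 1) Filter.atTop Filter.atTop :=
      Filter.tendsto_atTop_add_const_right _ (-1) tendsto_natCast_atTop_atTop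
    have h2' : Filter.Tendsto (fun n : ℕ => 1 / ((n:ℝ) - 1)) Filter.atTop (nhds 0) := by
      simpa [one_div, Pi.inv_def] using h1'.inv_tendsto_atTop
    simpa using h2'.const_add 1
  have t1 : Filter.Tendsto (fun n : ℕ => (1 + 1 / ((n:ℝ) - 1)) ^ (H - 1/2))
      Filter.atTop (nhds 1) := by
    have := (Real.continuousAt_rpow_const 1 (H - 1/2) (Or.inl one_ne_zero)).tendsto.comp t0
    simpa [Real.one_rpow, Function.comp_def] using this
  have t2 : Filter.Tendsto
      (fun n : ℕ => σ * cH H / (H + 1/2) * (1 + 1 / ((n:ℝ) - 1)) ^ (H - 1/2))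
      Filter.atTop (nhds (σ * cH H / (H + 1/2))) := by
    simpa using t1.const_mul (σ * cH H / (H + 1/2))
  refine tendsto_of_tendsto_of_tendsto_of_le_of_le' tendsto_const_nhds t2 ?_ ?_
  · filter_upwards [Filter.eventually_ge_atTop 2] with n hn
    exact (main n hn).1
  · filter_upwards [Filter.eventually_ge_atTop 2] with n hn
    exact (main n hn).2.1
end

section
/- There exists an integer n_H ≥ 2 such that for every n ≥ n_H one has ∑_{i=1}^{n−1} j_n(i) − g_n > 0 (equivalently, in the N-fractional binary market the up-jump value u_n^{(N)}(−1,…,−1) = (−∑_{i=1}^{n−1} j_n(i) + g_n)/N^H is strictly negative for all N ≥ n). -/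
open MeasureTheory

section Helpers

variable {H : ℝ}

lemma cH_pos_s2 (h1 : 1/2 < H) (h2 : H < 1) : 0 < cH H := by
  unfold cH
  apply Real.sqrt_pos.mpr
  apply div_pos
  · exact mul_pos (by linarith) (Real.Gamma_pos_of_pos (by linarith))
  · exact mul_pos (Real.Gamma_pos_of_pos (by linarith)) (Real.Gamma_pos_of_pos (by linarith))

lemma cH_nonneg : 0 ≤ cH H := Real.sqrt_nonneg _

lemma ae_ne_zero : ∀ᵐ v ∂(volume : Measure ℝ), v ≠ 0 := by
  rw [ae_iff]
  have : {v : ℝ | ¬ v ≠ 0} = {0} := by ext v; simp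
  rw [this]
  exact Real.volume_singleton

/-! ### Inner integral of `jn` -/

lemma inner1_integrable (h1 : 1/2 < H) (h2 : H < 1) (N x : ℝ) (hN : 2 ≤ N) (hx0 : 0 ≤ x) (hx : x ≤ N - 1) :
    IntervalIntegrable
      (fun v => (v + N - 1) ^ (H - 1/2) * (v + N - 1 - x) ^ (H - 3/2)) volume 0 1 := by
  apply IntervalIntegrable.mono_fun'
    (g := fun v => N ^ (H - 1/2) * v ^ (H - 3/2))
  · exact (intervalIntegral.intervalIntegrable_rpow' (by linarith)).const_mul _
  · exact Measurable.aestronglyMeasurable (by fun_prop)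
  · rw [Set.uIoc_of_le (by norm_num : (0:ℝ) ≤ 1)]
    filter_upwards [ae_restrict_mem measurableSet_Ioc] with v hv
    have hv0 : 0 < v := hv.1
    have hv1 : v ≤ 1 := hv.2
    rw [Real.norm_eq_abs, abs_of_nonneg
      (mul_nonneg (Real.rpow_nonneg (by linarith) _) (Real.rpow_nonneg (by linarith) _))]
    apply mul_le_mul
    · exact Real.rpow_le_rpow (by linarith) (by linarith) (by linarith)
    · exact Real.rpow_le_rpow_of_nonpos (by linarith) (by linarith) (by linarith)
    · exact Real.rpow_nonneg (by linarith) _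
    · exact Real.rpow_nonneg (by linarith) _

lemma inner1_lower (h1 : 1/2 < H) (h2 : H < 1) (N x : ℝ) (hN : 2 ≤ N) (hx0 : 0 ≤ x) (hx : x ≤ N - 1) :
    (N - 1) ^ (H - 1/2) * N ^ (H - 3/2)
      ≤ ∫ v in (0:ℝ)..1, (v + N - 1) ^ (H - 1/2) * (v + N - 1 - x) ^ (H - 3/2) := by
  have hae : (fun _ : ℝ => (N - 1) ^ (H - 1/2) * N ^ (H - 3/2)) ≤ᵐ[volume.restrict (Set.Icc (0:ℝ) 1)]
      fun v => (v + N - 1) ^ (H - 1/2) * (v + N - 1 - x) ^ (H - 3/2) := by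
    filter_upwards [ae_restrict_mem measurableSet_Icc, ae_restrict_of_ae ae_ne_zero]
      with v hv hv0
    have hv0' : 0 < v := lt_of_le_of_ne hv.1 (Ne.symm hv0)
    have hv1 : v ≤ 1 := hv.2
    apply mul_le_mul
    · exact Real.rpow_le_rpow (by linarith) (by linarith) (by linarith)
    · exact Real.rpow_le_rpow_of_nonpos (by linarith) (by linarith) (by linarith)
    · exact Real.rpow_nonneg (by linarith) _
    · exact Real.rpow_nonneg (by linarith) _
  have h := intervalIntegral.integral_mono_ae_restrict (μ := volume) zero_le_one
    intervalIntegrable_const (inner1_integrable h1 h2 N x hN hx0 hx) hae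
  simpa using h

lemma inner1_upper (h1 : 1/2 < H) (h2 : H < 1) (N x : ℝ) (hN : 2 ≤ N) (hx0 : 0 ≤ x) (hx : x ≤ N - 1) :
    (∫ v in (0:ℝ)..1, (v + N - 1) ^ (H - 1/2) * (v + N - 1 - x) ^ (H - 3/2))
      ≤ N ^ (H - 1/2) / (H - 1/2) := by
  have hae : (fun v => (v + N - 1) ^ (H - 1/2) * (v + N - 1 - x) ^ (H - 3/2))
      ≤ᵐ[volume.restrict (Set.Icc (0:ℝ) 1)]
      fun v => N ^ (H - 1/2) * v ^ (H - 3/2) := by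
    filter_upwards [ae_restrict_mem measurableSet_Icc, ae_restrict_of_ae ae_ne_zero]
      with v hv hv0
    have hv0' : 0 < v := lt_of_le_of_ne hv.1 (Ne.symm hv0)
    have hv1 : v ≤ 1 := hv.2
    apply mul_le_mul
    · exact Real.rpow_le_rpow (by linarith) (by linarith) (by linarith)
    · exact Real.rpow_le_rpow_of_nonpos (by linarith) (by linarith) (by linarith)
    · exact Real.rpow_nonneg (by linarith) _
    · exact Real.rpow_nonneg (by linarith) _
  have h := intervalIntegral.integral_mono_ae_restrict (μ := volume) zero_le_one
    (inner1_integrable h1 h2 N x hN hx0 hx)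
    ((intervalIntegral.intervalIntegrable_rpow' (by linarith)).const_mul _) hae
  calc (∫ v in (0:ℝ)..1, (v + N - 1) ^ (H - 1/2) * (v + N - 1 - x) ^ (H - 3/2))
      ≤ ∫ v in (0:ℝ)..1, N ^ (H - 1/2) * v ^ (H - 3/2) := h
    _ = N ^ (H - 1/2) / (H - 1/2) := by
        rw [intervalIntegral.integral_const_mul, integral_rpow (Or.inl (by linarith)),
          Real.one_rpow, Real.zero_rpow (by intro hc; rw [show H - 3/2 + 1 = H - 1/2 by ring] at hc; linarith),
          show H - 3/2 + 1 = H - 1/2 by ring]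
        ring

lemma inner1_nonneg (h1 : 1/2 < H) (N x : ℝ) (hN : 2 ≤ N) (hx : x ≤ N - 1) :
    0 ≤ ∫ v in (0:ℝ)..1, (v + N - 1) ^ (H - 1/2) * (v + N - 1 - x) ^ (H - 3/2) := by
  apply intervalIntegral.integral_nonneg zero_le_one
  intro v hv
  exact mul_nonneg (Real.rpow_nonneg (by linarith [hv.1]) _)
    (Real.rpow_nonneg (by linarith [hv.1]) _)

lemma inner1_meas (H N : ℝ) : StronglyMeasurable fun x : ℝ =>
    ∫ v in (0:ℝ)..1, (v + N - 1) ^ (H - 1/2) * (v + N - 1 - x) ^ (H - 3/2) := by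
  have h : ∀ x : ℝ, (∫ v in (0:ℝ)..1, (v + N - 1) ^ (H - 1/2) * (v + N - 1 - x) ^ (H - 3/2))
      = ∫ v, (fun p : ℝ × ℝ => (p.2 + N - 1) ^ (H - 1/2) * (p.2 + N - 1 - p.1) ^ (H - 3/2)) (x, v)
          ∂(volume.restrict (Set.Ioc (0:ℝ) 1)) := fun x =>
    intervalIntegral.integral_of_le zero_le_one
  simp_rw [h]
  exact ((by fun_prop : Measurable fun p : ℝ × ℝ =>
    (p.2 + N - 1) ^ (H - 1/2) * (p.2 + N - 1 - p.1) ^ (H - 3/2)).stronglyMeasurable).integral_prod_right'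

/-! ### `jn` bounds -/

lemma jn_nonneg (h1 : 1/2 < H) {σ : ℝ} (hσ : 0 ≤ σ) {n i : ℕ} (hn : 2 ≤ n)
    (hi : 1 ≤ i) (hin : i ≤ n - 1) : 0 ≤ jn H σ n i := by
  have hN : (2:ℝ) ≤ (n:ℝ) := by exact_mod_cast hn
  have hiN : (i:ℝ) ≤ (n:ℝ) - 1 := by
    have h' : i + 1 ≤ n := by omega
    have := (Nat.cast_le (α := ℝ)).mpr h'
    push_cast at this; linarith
  have hi1 : (1:ℝ) ≤ (i:ℝ) := by exact_mod_cast hi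
  apply mul_nonneg
  · exact mul_nonneg (mul_nonneg hσ cH_nonneg) (by linarith)
  · apply intervalIntegral.integral_nonneg (by linarith)
    intro x hx
    exact mul_nonneg (Real.rpow_nonneg (by linarith [hx.1]) _)
      (inner1_nonneg h1 _ x hN (le_trans hx.2 hiN))

lemma jn_lower (h1 : 1/2 < H) (h2 : H < 1) {σ : ℝ} (hσ : 0 ≤ σ) {n i : ℕ} (hn : 2 ≤ n)
    (hi : 2 ≤ i) (hin : i ≤ n - 1) :
    σ * cH H * (H - 1/2) * (n:ℝ) ^ (H - 3/2) ≤ jn H σ n i := by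
  have hN : (2:ℝ) ≤ (n:ℝ) := by exact_mod_cast hn
  have hiN : (i:ℝ) ≤ (n:ℝ) - 1 := by
    have h' : i + 1 ≤ n := by omega
    have := (Nat.cast_le (α := ℝ)).mpr h'
    push_cast at this; linarith
  have hi2 : (2:ℝ) ≤ (i:ℝ) := by exact_mod_cast hi
  have hA : 0 ≤ σ * cH H * (H - 1/2) :=
    mul_nonneg (mul_nonneg hσ cH_nonneg) (by linarith)
  unfold jn
  apply mul_le_mul_of_nonneg_left _ hA
  -- integrability of the outer integrand
  have hFint : IntervalIntegrable
      (fun x => x ^ ((1:ℝ)/2 - H) *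
        ∫ v in (0:ℝ)..1, (v + (n:ℝ) - 1) ^ (H - 1/2) * (v + (n:ℝ) - 1 - x) ^ (H - 3/2))
      volume ((i:ℝ) - 1) (i:ℝ) := by
    apply IntervalIntegrable.mono_fun'
      (g := fun _ => (n:ℝ) ^ (H - 1/2) / (H - 1/2))
    · exact intervalIntegrable_const
    · exact (Measurable.mul (by fun_prop : Measurable fun x : ℝ => x ^ ((1:ℝ)/2 - H)) (inner1_meas H (n:ℝ)).measurable).aestronglyMeasurable
    · rw [Set.uIoc_of_le (by linarith : (i:ℝ) - 1 ≤ (i:ℝ))]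
      filter_upwards [ae_restrict_mem measurableSet_Ioc] with x hx
      have hx1 : 1 ≤ x := by linarith [hx.1]
      have hx2 : x ≤ (n:ℝ) - 1 := le_trans hx.2 hiN
      have hnn : 0 ≤ x ^ ((1:ℝ)/2 - H) *
          ∫ v in (0:ℝ)..1, (v + (n:ℝ) - 1) ^ (H - 1/2) * (v + (n:ℝ) - 1 - x) ^ (H - 3/2) :=
        mul_nonneg (Real.rpow_nonneg (by linarith) _) (inner1_nonneg h1 _ x hN hx2)
      rw [Real.norm_eq_abs, abs_of_nonneg hnn]
      have t1 : x ^ ((1:ℝ)/2 - H) ≤ 1 := by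
        have := Real.rpow_le_rpow_of_nonpos zero_lt_one hx1 (by linarith : (1:ℝ)/2 - H ≤ 0)
        rwa [Real.one_rpow] at this
      calc x ^ ((1:ℝ)/2 - H) *
            (∫ v in (0:ℝ)..1, (v + (n:ℝ) - 1) ^ (H - 1/2) * (v + (n:ℝ) - 1 - x) ^ (H - 3/2))
          ≤ 1 * ((n:ℝ) ^ (H - 1/2) / (H - 1/2)) := by
            apply mul_le_mul t1 (inner1_upper h1 h2 _ x hN (by linarith) hx2)
              (inner1_nonneg h1 _ x hN hx2) zero_le_one
        _ = (n:ℝ) ^ (H - 1/2) / (H - 1/2) := one_mul _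
  have key := intervalIntegral.integral_mono_on (μ := volume)
    (f := fun _ => (n:ℝ) ^ (H - 3/2))
    (by linarith : (i:ℝ) - 1 ≤ (i:ℝ)) intervalIntegrable_const hFint ?_
  · simpa using key
  · intro x hx
    have hx1 : 1 ≤ x := by linarith [hx.1]
    have hx2 : x ≤ (n:ℝ) - 1 := le_trans hx.2 hiN
    have l1 : ((n:ℝ) - 1) ^ ((1:ℝ)/2 - H) ≤ x ^ ((1:ℝ)/2 - H) :=
      Real.rpow_le_rpow_of_nonpos (by linarith) hx2 (by linarith)
    have l2 := inner1_lower h1 h2 (n:ℝ) x hN (by linarith) hx2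
    have hid : ((n:ℝ) - 1) ^ ((1:ℝ)/2 - H) * (((n:ℝ) - 1) ^ (H - 1/2) * (n:ℝ) ^ (H - 3/2))
        = (n:ℝ) ^ (H - 3/2) := by
      rw [← mul_assoc, ← Real.rpow_add (by linarith : (0:ℝ) < (n:ℝ) - 1),
        show (1:ℝ)/2 - H + (H - 1/2) = 0 by ring, Real.rpow_zero, one_mul]
    calc (n:ℝ) ^ (H - 3/2)
        = ((n:ℝ) - 1) ^ ((1:ℝ)/2 - H) * (((n:ℝ) - 1) ^ (H - 1/2) * (n:ℝ) ^ (H - 3/2)) := hid.symm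
      _ ≤ x ^ ((1:ℝ)/2 - H) * (((n:ℝ) - 1) ^ (H - 1/2) * (n:ℝ) ^ (H - 3/2)) :=
          mul_le_mul_of_nonneg_right l1
            (mul_nonneg (Real.rpow_nonneg (by linarith) _) (Real.rpow_nonneg (by linarith) _))
      _ ≤ x ^ ((1:ℝ)/2 - H) *
            ∫ v in (0:ℝ)..1, (v + (n:ℝ) - 1) ^ (H - 1/2) * (v + (n:ℝ) - 1 - x) ^ (H - 3/2) :=
          mul_le_mul_of_nonneg_left l2 (Real.rpow_nonneg (by linarith) _)

/-! ### Inner integral of `gn` -/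

lemma inner2_integrable (h1 : 1/2 < H) (h2 : H < 1) (N x : ℝ) (hN : 2 ≤ N) (hx1 : N - 1 ≤ x) (hx2 : x ≤ N) :
    IntervalIntegrable (fun y => (y * (N - x) + x) ^ (H - 1/2) * y ^ (H - 3/2)) volume 0 1 := by
  apply IntervalIntegrable.mono_fun'
    (g := fun y => N ^ (H - 1/2) * y ^ (H - 3/2))
  · exact (intervalIntegral.intervalIntegrable_rpow' (by linarith)).const_mul _
  · exact Measurable.aestronglyMeasurable (by fun_prop)
  · rw [Set.uIoc_of_le (by norm_num : (0:ℝ) ≤ 1)]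
    filter_upwards [ae_restrict_mem measurableSet_Ioc] with y hy
    have hy0 : 0 < y := hy.1
    have hy1 : y ≤ 1 := hy.2
    have hbase0 : 0 ≤ y * (N - x) + x := by nlinarith
    have hbaseN : y * (N - x) + x ≤ N := by nlinarith
    rw [Real.norm_eq_abs, abs_of_nonneg
      (mul_nonneg (Real.rpow_nonneg hbase0 _) (Real.rpow_nonneg (by linarith) _))]
    exact mul_le_mul_of_nonneg_right (Real.rpow_le_rpow hbase0 hbaseN (by linarith))
      (Real.rpow_nonneg (by linarith) _)

lemma inner2_nonneg (h1 : 1/2 < H) (N x : ℝ) (hN : 2 ≤ N) (hx1 : N - 1 ≤ x) (hx2 : x ≤ N) :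
    0 ≤ ∫ y in (0:ℝ)..1, (y * (N - x) + x) ^ (H - 1/2) * y ^ (H - 3/2) := by
  apply intervalIntegral.integral_nonneg zero_le_one
  intro y hy
  have : 0 ≤ y * (N - x) + x := by nlinarith [hy.1, hy.2]
  exact mul_nonneg (Real.rpow_nonneg this _) (Real.rpow_nonneg hy.1 _)

lemma inner2_upper (h1 : 1/2 < H) (h2 : H < 1) (N x : ℝ) (hN : 2 ≤ N) (hx1 : N - 1 ≤ x) (hx2 : x ≤ N) :
    (∫ y in (0:ℝ)..1, (y * (N - x) + x) ^ (H - 1/2) * y ^ (H - 3/2))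
      ≤ N ^ (H - 1/2) / (H - 1/2) := by
  have h := intervalIntegral.integral_mono_on (μ := volume) zero_le_one
    (inner2_integrable h1 h2 N x hN hx1 hx2)
    ((intervalIntegral.intervalIntegrable_rpow' (by linarith : (-1:ℝ) < H - 3/2)).const_mul
      (N ^ (H - 1/2))) ?_
  · calc (∫ y in (0:ℝ)..1, (y * (N - x) + x) ^ (H - 1/2) * y ^ (H - 3/2))
        ≤ ∫ y in (0:ℝ)..1, N ^ (H - 1/2) * y ^ (H - 3/2) := h
      _ = N ^ (H - 1/2) / (H - 1/2) := by
          rw [intervalIntegral.integral_const_mul, integral_rpow (Or.inl (by linarith)),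
            Real.one_rpow, Real.zero_rpow (by intro hc; rw [show H - 3/2 + 1 = H - 1/2 by ring] at hc; linarith),
            show H - 3/2 + 1 = H - 1/2 by ring]
          ring
  · intro y hy
    have hy0 : 0 ≤ y := hy.1
    have hy1 : y ≤ 1 := hy.2
    have hbase0 : 0 ≤ y * (N - x) + x := by nlinarith
    have hbaseN : y * (N - x) + x ≤ N := by nlinarith
    exact mul_le_mul_of_nonneg_right (Real.rpow_le_rpow hbase0 hbaseN (by linarith))
      (Real.rpow_nonneg hy0 _)

lemma inner2_meas (H N : ℝ) : StronglyMeasurable fun x : ℝ =>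
    ∫ y in (0:ℝ)..1, (y * (N - x) + x) ^ (H - 1/2) * y ^ (H - 3/2) := by
  have h : ∀ x : ℝ, (∫ y in (0:ℝ)..1, (y * (N - x) + x) ^ (H - 1/2) * y ^ (H - 3/2))
      = ∫ y, (fun p : ℝ × ℝ => (p.2 * (N - p.1) + p.1) ^ (H - 1/2) * p.2 ^ (H - 3/2)) (x, y)
          ∂(volume.restrict (Set.Ioc (0:ℝ) 1)) := fun x =>
    intervalIntegral.integral_of_le zero_le_one
  simp_rw [h]
  exact ((by fun_prop : Measurable fun p : ℝ × ℝ =>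
    (p.2 * (N - p.1) + p.1) ^ (H - 1/2) * p.2 ^ (H - 3/2)).stronglyMeasurable).integral_prod_right'

/-! ### `gn` bound -/

lemma gn_le (h1 : 1/2 < H) (h2 : H < 1) {σ : ℝ} (hσ : 0 ≤ σ) {n : ℕ} (hn : 2 ≤ n) :
    gn H σ n ≤ 2 * (σ * cH H) := by
  have hN : (2:ℝ) ≤ (n:ℝ) := by exact_mod_cast hn
  set N := (n:ℝ) with hNdef
  have hN1 : (1:ℝ) ≤ N - 1 := by linarith
  -- pointwise bound of the outer integrand on Icc (N-1) N
  have hpt : ∀ x ∈ Set.Icc (N - 1) N,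
      x ^ ((1:ℝ)/2 - H) * (N - x) ^ (H - 1/2) *
        (∫ y in (0:ℝ)..1, (y * (N - x) + x) ^ (H - 1/2) * y ^ (H - 3/2))
      ≤ (N - 1) ^ ((1:ℝ)/2 - H) * (N ^ (H - 1/2) / (H - 1/2)) := by
    intro x hx
    have hxl : N - 1 ≤ x := hx.1
    have hxu : x ≤ N := hx.2
    have hx0 : (0:ℝ) < x := by linarith
    have t1 : x ^ ((1:ℝ)/2 - H) ≤ (N - 1) ^ ((1:ℝ)/2 - H) :=
      Real.rpow_le_rpow_of_nonpos (by linarith) hxl (by linarith)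
    have t2 : (N - x) ^ (H - 1/2) ≤ 1 :=
      Real.rpow_le_one (by linarith) (by linarith) (by linarith)
    have t3 := inner2_upper h1 h2 N x hN hxl hxu
    have t4 := inner2_nonneg h1 N x hN hxl hxu
    calc x ^ ((1:ℝ)/2 - H) * (N - x) ^ (H - 1/2) *
          (∫ y in (0:ℝ)..1, (y * (N - x) + x) ^ (H - 1/2) * y ^ (H - 3/2))
        ≤ ((N - 1) ^ ((1:ℝ)/2 - H) * 1) * (N ^ (H - 1/2) / (H - 1/2)) := by
          apply mul_le_mul _ t3 t4
          · exact mul_nonneg (Real.rpow_nonneg (by linarith) _) (by norm_num)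
          · exact mul_le_mul t1 t2 (Real.rpow_nonneg (by linarith) _)
              (Real.rpow_nonneg (by linarith) _)
      _ = (N - 1) ^ ((1:ℝ)/2 - H) * (N ^ (H - 1/2) / (H - 1/2)) := by ring
  have hnn : ∀ x ∈ Set.Ioc (N - 1) N,
      0 ≤ x ^ ((1:ℝ)/2 - H) * (N - x) ^ (H - 1/2) *
        (∫ y in (0:ℝ)..1, (y * (N - x) + x) ^ (H - 1/2) * y ^ (H - 3/2)) := by
    intro x hx
    exact mul_nonneg (mul_nonneg (Real.rpow_nonneg (by linarith [hx.1]) _)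
      (Real.rpow_nonneg (by linarith [hx.2]) _)) (inner2_nonneg h1 N x hN hx.1.le hx.2)
  -- integrability of the outer integrand
  have hGint : IntervalIntegrable
      (fun x => x ^ ((1:ℝ)/2 - H) * (N - x) ^ (H - 1/2) *
        ∫ y in (0:ℝ)..1, (y * (N - x) + x) ^ (H - 1/2) * y ^ (H - 3/2))
      volume (N - 1) N := by
    apply IntervalIntegrable.mono_fun'
      (g := fun _ => (N - 1) ^ ((1:ℝ)/2 - H) * (N ^ (H - 1/2) / (H - 1/2)))
    · exact intervalIntegrable_const
    · exact (Measurable.mul (by fun_prop : Measurable fun x : ℝ => x ^ ((1:ℝ)/2 - H) * (N - x) ^ (H - 1/2)) (inner2_meas H N).measurable).aestronglyMeasurable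
    · rw [Set.uIoc_of_le (by linarith : N - 1 ≤ N)]
      filter_upwards [ae_restrict_mem measurableSet_Ioc] with x hx
      rw [Real.norm_eq_abs, abs_of_nonneg (hnn x hx)]
      exact hpt x ⟨hx.1.le, hx.2⟩
  have key := intervalIntegral.integral_mono_on (μ := volume)
    (g := fun _ => (N - 1) ^ ((1:ℝ)/2 - H) * (N ^ (H - 1/2) / (H - 1/2)))
    (by linarith : N - 1 ≤ N) hGint intervalIntegrable_const hpt
  have hval : (∫ _ in (N - 1)..N, (N - 1) ^ ((1:ℝ)/2 - H) * (N ^ (H - 1/2) / (H - 1/2)))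
      = (N - 1) ^ ((1:ℝ)/2 - H) * (N ^ (H - 1/2) / (H - 1/2)) := by
    rw [intervalIntegral.integral_const, show N - (N - 1) = (1:ℝ) by ring, one_smul]
  rw [hval] at key
  -- now bound gn
  have hAc : 0 ≤ σ * cH H * (H - 1/2) :=
    mul_nonneg (mul_nonneg hσ cH_nonneg) (by linarith)
  have step1 : gn H σ n ≤ σ * cH H * (H - 1/2) *
      ((N - 1) ^ ((1:ℝ)/2 - H) * (N ^ (H - 1/2) / (H - 1/2))) := by
    unfold gn
    exact mul_le_mul_of_nonneg_left key hAc
  have hne : H - 1/2 ≠ 0 := by intro hc; rw [sub_eq_zero] at hc; linarith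
  have step2 : σ * cH H * (H - 1/2) *
      ((N - 1) ^ ((1:ℝ)/2 - H) * (N ^ (H - 1/2) / (H - 1/2)))
      = σ * cH H * ((N - 1) ^ ((1:ℝ)/2 - H) * N ^ (H - 1/2)) := by
    have e : σ * cH H * (H - 1/2) * ((N - 1) ^ ((1:ℝ)/2 - H) * (N ^ (H - 1/2) / (H - 1/2)))
        = σ * cH H * ((N - 1) ^ ((1:ℝ)/2 - H) * N ^ (H - 1/2)) * ((H - 1/2) / (H - 1/2)) := by
      ring
    rw [e, div_self hne, mul_one]
  -- (N-1)^(1/2-H) * N^(H-1/2) ≤ 2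
  have hfac : (N - 1) ^ ((1:ℝ)/2 - H) * N ^ (H - 1/2) ≤ 2 := by
    have hN2 : N ≤ 2 * (N - 1) := by linarith
    have e1 : N ^ (H - 1/2) ≤ (2 * (N - 1)) ^ (H - 1/2) :=
      Real.rpow_le_rpow (by linarith) hN2 (by linarith)
    have e2 : (2 * (N - 1)) ^ (H - 1/2) = 2 ^ (H - 1/2) * (N - 1) ^ (H - 1/2) :=
      Real.mul_rpow (by norm_num) (by linarith)
    have e3 : (N - 1) ^ ((1:ℝ)/2 - H) * (N - 1) ^ (H - 1/2) = 1 := by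
      rw [← Real.rpow_add (by linarith : (0:ℝ) < N - 1),
        show (1:ℝ)/2 - H + (H - 1/2) = 0 by ring, Real.rpow_zero]
    have e4 : (2:ℝ) ^ (H - 1/2) ≤ 2 := by
      have := Real.rpow_le_rpow_of_exponent_le (by norm_num : (1:ℝ) ≤ 2)
        (by linarith : H - 1/2 ≤ 1)
      rwa [Real.rpow_one] at this
    have hnn1 : (0:ℝ) ≤ (N - 1) ^ ((1:ℝ)/2 - H) := Real.rpow_nonneg (by linarith) _
    calc (N - 1) ^ ((1:ℝ)/2 - H) * N ^ (H - 1/2)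
        ≤ (N - 1) ^ ((1:ℝ)/2 - H) * (2 ^ (H - 1/2) * (N - 1) ^ (H - 1/2)) := by
          rw [← e2]; exact mul_le_mul_of_nonneg_left e1 hnn1
      _ = 2 ^ (H - 1/2) * ((N - 1) ^ ((1:ℝ)/2 - H) * (N - 1) ^ (H - 1/2)) := by ring
      _ = 2 ^ (H - 1/2) := by rw [e3, mul_one]
      _ ≤ 2 := e4
  have hsc : 0 ≤ σ * cH H := mul_nonneg hσ cH_nonneg
  calc gn H σ n ≤ σ * cH H * ((N - 1) ^ ((1:ℝ)/2 - H) * N ^ (H - 1/2)) := by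
        rw [← step2]; exact step1
    _ ≤ σ * cH H * 2 := mul_le_mul_of_nonneg_left hfac hsc
    _ = 2 * (σ * cH H) := by ring

end Helpers

/-- Sottinen's key estimate: there is `n_H ≥ 2` such that for all `n ≥ n_H` the sum
`∑_{i=1}^{n-1} j_n(i)` dominates `g_n`; equivalently, the up-jump value
`u_n^{(N)}(-1,…,-1) = (-∑_{i=1}^{n-1} j_n(i) + g_n)/N^H` is strictly negative for `N ≥ n`. -/
theorem exists_nH (H σ : ℝ) (hH : H ∈ Set.Ioo (1/2 : ℝ) 1) (hσ : 0 < σ) :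
    ∃ nH : ℕ, 2 ≤ nH ∧ ∀ n : ℕ, nH ≤ n →
      0 < (∑ i ∈ Finset.Icc 1 (n - 1), jn H σ n i) - gn H σ n ∧
      ∀ N : ℕ, n ≤ N →
        (-(∑ i ∈ Finset.Icc 1 (n - 1), jn H σ n i) + gn H σ n) / (N : ℝ) ^ H < 0 := by
  obtain ⟨h1, h2⟩ := hH
  have hc : 0 < cH H := cH_pos_s2 h1 h2
  have hHpos : 0 < H - 1/2 := by linarith
  have hA : 0 < σ * cH H * (H - 1/2) :=
    mul_pos (mul_pos hσ hc) hHpos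
  -- choose n₀ so that n^(H-1/2) is large
  have htend : Filter.Tendsto (fun n : ℕ => (n:ℝ) ^ (H - 1/2)) Filter.atTop Filter.atTop :=
    (tendsto_rpow_atTop hHpos).comp tendsto_natCast_atTop_atTop
  obtain ⟨n₀, hn₀⟩ := Filter.eventually_atTop.mp
    (htend.eventually_gt_atTop (4 / (H - 1/2)))
  refine ⟨max n₀ 4, le_trans (by norm_num) (le_max_right _ _), ?_⟩
  intro n hn
  have hn4 : 4 ≤ n := le_trans (le_max_right _ _) hn
  have hn0 : n₀ ≤ n := le_trans (le_max_left _ _) hn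
  have hn2 : 2 ≤ n := by omega
  have hN : (2:ℝ) ≤ (n:ℝ) := by exact_mod_cast hn2
  have hN4 : (4:ℝ) ≤ (n:ℝ) := by exact_mod_cast hn4
  have hrp : 4 / (H - 1/2) < (n:ℝ) ^ (H - 1/2) := hn₀ n hn0
  -- the sum bound
  have hsub : Finset.Icc 2 (n - 1) ⊆ Finset.Icc 1 (n - 1) :=
    Finset.Icc_subset_Icc (by norm_num) le_rfl
  have hS1 : (∑ i ∈ Finset.Icc 2 (n - 1), jn H σ n i)
      ≤ ∑ i ∈ Finset.Icc 1 (n - 1), jn H σ n i := by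
    apply Finset.sum_le_sum_of_subset_of_nonneg hsub
    intro i hi _
    rw [Finset.mem_Icc] at hi
    exact jn_nonneg h1 hσ.le hn2 hi.1 hi.2
  have hS2 : ((n - 2 : ℕ) : ℝ) * (σ * cH H * (H - 1/2) * (n:ℝ) ^ (H - 3/2))
      ≤ ∑ i ∈ Finset.Icc 2 (n - 1), jn H σ n i := by
    have hcard : (Finset.Icc 2 (n - 1)).card = n - 2 := by
      rw [Nat.card_Icc]; omega
    have := Finset.card_nsmul_le_sum (Finset.Icc 2 (n - 1))
      (fun i => jn H σ n i) (σ * cH H * (H - 1/2) * (n:ℝ) ^ (H - 3/2)) ?_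
    · rwa [hcard, nsmul_eq_mul] at this
    · intro i hi
      rw [Finset.mem_Icc] at hi
      exact jn_lower h1 h2 hσ.le hn2 hi.1 hi.2
  have hcast : ((n - 2 : ℕ) : ℝ) = (n:ℝ) - 2 := by
    have : (2:ℕ) ≤ n := hn2
    push_cast [Nat.cast_sub this]
    ring
  -- numeric estimate
  have hrpos : (0:ℝ) < (n:ℝ) ^ (H - 3/2) := Real.rpow_pos_of_pos (by linarith) _
  have hmul : (n:ℝ) * (n:ℝ) ^ (H - 3/2) = (n:ℝ) ^ (H - 1/2) := by
    nth_rewrite 1 [← Real.rpow_one (n:ℝ)]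
    rw [← Real.rpow_add (by linarith : (0:ℝ) < (n:ℝ)), show 1 + (H - 3/2) = H - 1/2 by ring]
  have hg := gn_le h1 h2 hσ.le hn2
  have hkey : 0 < (∑ i ∈ Finset.Icc 1 (n - 1), jn H σ n i) - gn H σ n := by
    have e1 : ((n:ℝ) - 2) * (σ * cH H * (H - 1/2) * (n:ℝ) ^ (H - 3/2))
        ≥ ((n:ℝ) / 2) * (σ * cH H * (H - 1/2) * (n:ℝ) ^ (H - 3/2)) := by
      apply mul_le_mul_of_nonneg_right (by linarith) (le_of_lt (mul_pos hA hrpos))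
    have e2 : ((n:ℝ) / 2) * (σ * cH H * (H - 1/2) * (n:ℝ) ^ (H - 3/2))
        = (σ * cH H * (H - 1/2) / 2) * ((n:ℝ) * (n:ℝ) ^ (H - 3/2)) := by ring
    have e3 : (σ * cH H * (H - 1/2) / 2) * (n:ℝ) ^ (H - 1/2)
        > (σ * cH H * (H - 1/2) / 2) * (4 / (H - 1/2)) := by
      apply mul_lt_mul_of_pos_left hrp (by positivity)
    have e4 : (σ * cH H * (H - 1/2) / 2) * (4 / (H - 1/2)) = 2 * (σ * cH H) := by
      have e : σ * cH H * (H - 1/2) / 2 * (4 / (H - 1/2))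
          = 2 * (σ * cH H) * ((H - 1/2) / (H - 1/2)) := by ring
      rw [e, div_self (ne_of_gt hHpos), mul_one]
    have hS : ((n:ℝ) - 2) * (σ * cH H * (H - 1/2) * (n:ℝ) ^ (H - 3/2))
        ≤ ∑ i ∈ Finset.Icc 1 (n - 1), jn H σ n i := by
      rw [← hcast]; exact le_trans hS2 hS1
    have : 2 * (σ * cH H) < ∑ i ∈ Finset.Icc 1 (n - 1), jn H σ n i := by
      calc 2 * (σ * cH H) = (σ * cH H * (H - 1/2) / 2) * (4 / (H - 1/2)) := e4.symm
        _ < (σ * cH H * (H - 1/2) / 2) * (n:ℝ) ^ (H - 1/2) := e3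
        _ = ((n:ℝ) / 2) * (σ * cH H * (H - 1/2) * (n:ℝ) ^ (H - 3/2)) := by
            rw [← hmul]; ring
        _ ≤ ((n:ℝ) - 2) * (σ * cH H * (H - 1/2) * (n:ℝ) ^ (H - 3/2)) := e1
        _ ≤ ∑ i ∈ Finset.Icc 1 (n - 1), jn H σ n i := hS
    linarith
  refine ⟨hkey, ?_⟩
  intro N hNn
  have hNpos : (0:ℝ) < (N:ℝ) := by
    have : 4 ≤ N := le_trans hn4 hNn
    have : (4:ℝ) ≤ (N:ℝ) := by exact_mod_cast this
    linarith
  apply div_neg_of_neg_of_pos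
  · linarith
  · exact Real.rpow_pos_of_pos hNpos _
end

section
/- Let (λ_N)_{N≥1} be a sequence in [0,1] with λ_N·√N → 0 as N → ∞. Then there exists N₀ such that for all N ≥ N₀: (i) S_k^{(N)}(−1,…,−1) > 0 for every k ≤ N; (ii) (1−λ_N)·S_{N−1}^{(N)}(−1,…,−1) − S_N^{(N)}(−1,…,−1,x) ≥ 0 for both x ∈ {−1,1}; and (iii) (1−λ_N)·S_{N−1}^{(N)}(−1,…,−1) − S_N^{(N)}(−1,…,−1,−1) > 0. (Hence the 1-step strategy that short-sells one unit of stock at time N−1 on the all-down path and liquidates at time N is a λ_N-arbitrage in the N-fractional binary market.) -/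
open MeasureTheory

/-- The stock price in the `N`-fractional binary market after `n` steps along the
sign path `x` (indexed from 1):
`S_n^{(N)}(x) = s₀ ∏_{k=1}^n (1 + (∑_{i=1}^{k-1} j_k(i) x_i + g_k x_k)/N^H)`. -/
noncomputable def Sp (H σ : ℝ) (N : ℕ) (s₀ : ℝ) (n : ℕ) (x : ℕ → ℝ) : ℝ :=
  s₀ * ∏ k ∈ Finset.Icc 1 n,
    (1 + ((∑ i ∈ Finset.Icc 1 (k - 1), jn H σ k i * x i) + gn H σ k * x k) / (N : ℝ) ^ H)

namespace OneStepAux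

lemma cH_pos {H : ℝ} (h1 : 1/2 < H) (h2 : H < 1) : 0 < cH H := by
  apply Real.sqrt_pos.2
  apply div_pos
  · exact mul_pos (by linarith) (Real.Gamma_pos_of_pos (by linarith))
  · exact mul_pos (Real.Gamma_pos_of_pos (by linarith)) (Real.Gamma_pos_of_pos (by linarith))

/-- inner integral of `jn` as a function of the outer variable. -/
noncomputable def innerJ (H : ℝ) (n : ℕ) (x : ℝ) : ℝ :=
  ∫ v in (0:ℝ)..1, (v + n - 1) ^ (H - 1/2) * (v + n - 1 - x) ^ (H - 3/2)

lemma jn_eq (H σ : ℝ) (n i : ℕ) :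
    jn H σ n i = σ * cH H * (H - 1/2) *
      ∫ x in ((i : ℝ) - 1)..(i : ℝ), x ^ ((1:ℝ)/2 - H) * innerJ H n x := rfl

lemma ae_ne_zero_restrict (s : Set ℝ) : ∀ᵐ v ∂(volume.restrict s), v ≠ (0:ℝ) := by
  refine ae_restrict_of_ae ?_
  have h0 : (volume : Measure ℝ) {(0:ℝ)} = 0 := measure_singleton 0
  simpa [ae_iff, Set.setOf_eq_eq_singleton] using h0

variable {H : ℝ}

lemma intble_innerJ (h1 : 1/2 < H) (n : ℕ) (x : ℝ) :
    IntervalIntegrable (fun v => (v + (n:ℝ) - 1) ^ (H - 1/2) * (v + (n:ℝ) - 1 - x) ^ (H - 3/2))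
      volume 0 1 := by
  have h3 : IntervalIntegrable (fun v : ℝ => (v + ((n:ℝ) - 1 - x)) ^ (H - 3/2)) volume 0 1 := by
    have := (intervalIntegral.intervalIntegrable_rpow' (a := ((n:ℝ) - 1 - x))
      (b := 1 + ((n:ℝ) - 1 - x)) (r := H - 3/2) (by linarith)).comp_add_right ((n:ℝ) - 1 - x)
    simpa using this
  have h4 : IntervalIntegrable (fun v : ℝ => (v + (n:ℝ) - 1 - x) ^ (H - 3/2)) volume 0 1 := by
    simpa only [show ∀ v : ℝ, v + (n:ℝ) - 1 - x = v + ((n:ℝ) - 1 - x) from fun v => by ring]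
      using h3
  apply h4.continuousOn_mul
  apply ContinuousOn.rpow_const (by fun_prop)
  intro v _
  right
  linarith

lemma innerJ_nonneg {n : ℕ} {x : ℝ} (hx0 : 0 ≤ x) (hx : x ≤ (n:ℝ) - 1) :
    0 ≤ innerJ H n x := by
  apply intervalIntegral.integral_nonneg (by norm_num)
  intro v hv
  exact mul_nonneg (Real.rpow_nonneg (by linarith [hv.1]) _)
    (Real.rpow_nonneg (by linarith [hv.1]) _)

lemma innerJ_le (h1 : 1/2 < H) (h2 : H < 1) {n : ℕ} {x : ℝ} (hx0 : 0 ≤ x) (hx : x ≤ (n:ℝ) - 1) :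
    innerJ H n x ≤ (n:ℝ) ^ (H - 1/2) * (H - 1/2)⁻¹ := by
  have key : innerJ H n x ≤ ∫ v in (0:ℝ)..1, (n:ℝ) ^ (H - 1/2) * v ^ (H - 3/2) := by
    apply intervalIntegral.integral_mono_ae_restrict (by norm_num) (intble_innerJ h1 n x)
      ((intervalIntegral.intervalIntegrable_rpow' (by linarith)).const_mul _)
    filter_upwards [ae_restrict_mem measurableSet_Icc, ae_ne_zero_restrict _] with v hv hv0
    have hvpos : 0 < v := lt_of_le_of_ne hv.1 (Ne.symm hv0)
    have b1 : (v + (n:ℝ) - 1) ^ (H - 1/2) ≤ (n:ℝ) ^ (H - 1/2) :=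
      Real.rpow_le_rpow (by linarith) (by linarith [hv.2]) (by linarith)
    have b2 : (v + (n:ℝ) - 1 - x) ^ (H - 3/2) ≤ v ^ (H - 3/2) :=
      Real.rpow_le_rpow_of_nonpos hvpos (by linarith) (by linarith)
    exact mul_le_mul b1 b2 (Real.rpow_nonneg (by linarith) _)
      (Real.rpow_nonneg (n.cast_nonneg) _)
  have hval : (∫ v in (0:ℝ)..1, (n:ℝ) ^ (H - 1/2) * v ^ (H - 3/2))
      = (n:ℝ) ^ (H - 1/2) * (H - 1/2)⁻¹ := by
    rw [intervalIntegral.integral_const_mul, integral_rpow (Or.inl (by linarith)),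
      show H - 3/2 + 1 = H - 1/2 by ring, Real.one_rpow,
      Real.zero_rpow (ne_of_gt (by linarith)), sub_zero, one_div]
    norm_num
  rw [hval] at key
  exact key

lemma innerJ_le' (h1 : 1/2 < H) (h2 : H < 1) {n : ℕ} {x c : ℝ} (hx0 : 0 ≤ x) (hc : 0 < c)
    (hcx : c ≤ (n:ℝ) - 1 - x) :
    innerJ H n x ≤ (n:ℝ) ^ (H - 1/2) * c ^ (H - 3/2) := by
  have key : innerJ H n x ≤ ∫ _v in (0:ℝ)..1, (n:ℝ) ^ (H - 1/2) * c ^ (H - 3/2) := by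
    apply intervalIntegral.integral_mono_on (by norm_num) (intble_innerJ h1 n x)
      intervalIntegrable_const
    intro v hv
    have b1 : (v + (n:ℝ) - 1) ^ (H - 1/2) ≤ (n:ℝ) ^ (H - 1/2) :=
      Real.rpow_le_rpow (by linarith [hv.1]) (by linarith [hv.2]) (by linarith)
    have b2 : (v + (n:ℝ) - 1 - x) ^ (H - 3/2) ≤ c ^ (H - 3/2) :=
      Real.rpow_le_rpow_of_nonpos hc (by linarith [hv.1]) (by linarith)
    exact mul_le_mul b1 b2 (Real.rpow_nonneg (by linarith [hv.1]) _)
      (Real.rpow_nonneg (n.cast_nonneg) _)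
  simpa using key

lemma innerJ_ge (h1 : 1/2 < H) (h2 : H < 1) {n : ℕ} {x M : ℝ} (hx0 : 0 ≤ x) (hx : x ≤ (n:ℝ) - 1)
    (hM : (n:ℝ) - x ≤ M) :
    x ^ (H - 1/2) * M ^ (H - 3/2) ≤ innerJ H n x := by
  have hM0 : 0 < M := by linarith
  have key := intervalIntegral.integral_mono_ae_restrict (by norm_num : (0:ℝ) ≤ 1)
    (intervalIntegrable_const (c := x ^ (H - 1/2) * M ^ (H - 3/2)))
    (intble_innerJ h1 n x) ?_
  · have hc : (∫ _v in (0:ℝ)..1, x ^ (H - 1/2) * M ^ (H - 3/2))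
        = x ^ (H - 1/2) * M ^ (H - 3/2) := by simp
    rw [hc] at key
    exact key
  · filter_upwards [ae_restrict_mem measurableSet_Icc, ae_ne_zero_restrict _] with v hv hv0
    have hvpos : 0 < v := lt_of_le_of_ne hv.1 (Ne.symm hv0)
    have b1 : x ^ (H - 1/2) ≤ (v + (n:ℝ) - 1) ^ (H - 1/2) :=
      Real.rpow_le_rpow hx0 (by linarith) (by linarith)
    have b2 : M ^ (H - 3/2) ≤ (v + (n:ℝ) - 1 - x) ^ (H - 3/2) :=
      Real.rpow_le_rpow_of_nonpos (by linarith) (by linarith [hv.2]) (by linarith)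
    exact mul_le_mul b1 b2 (Real.rpow_nonneg hM0.le _) (Real.rpow_nonneg (by linarith) _)

lemma innerJ_contOn (h1 : 1/2 < H) (h2 : H < 1) {n : ℕ} {a b : ℝ} (ha : 0 ≤ a) (hb : b ≤ (n:ℝ) - 1) :
    ContinuousOn (innerJ H n) (Set.Icc a b) := by
  have key : ContinuousOn (fun x => ∫ v in Set.Ioc (0:ℝ) 1,
      ((v + (n:ℝ) - 1) ^ (H - 1/2) * (v + (n:ℝ) - 1 - x) ^ (H - 3/2)) ∂volume)
      (Set.Icc a b) := by
    apply MeasureTheory.continuousOn_of_dominated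
      (bound := fun v => (n:ℝ) ^ (H - 1/2) * v ^ (H - 3/2))
    · intro x _
      exact (intble_innerJ h1 n x).1.1
    · intro x hx
      filter_upwards [ae_restrict_mem measurableSet_Ioc] with v hv
      have hvpos : 0 < v := hv.1
      have hx0 : 0 ≤ x := le_trans ha hx.1
      have hxb : x ≤ (n:ℝ) - 1 := le_trans hx.2 hb
      rw [Real.norm_eq_abs, abs_of_nonneg (mul_nonneg (Real.rpow_nonneg (by linarith) _)
        (Real.rpow_nonneg (by linarith) _))]
      have b1 : (v + (n:ℝ) - 1) ^ (H - 1/2) ≤ (n:ℝ) ^ (H - 1/2) :=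
        Real.rpow_le_rpow (by linarith) (by linarith [hv.2]) (by linarith)
      have b2 : (v + (n:ℝ) - 1 - x) ^ (H - 3/2) ≤ v ^ (H - 3/2) :=
        Real.rpow_le_rpow_of_nonpos hvpos (by linarith) (by linarith)
      exact mul_le_mul b1 b2 (Real.rpow_nonneg (by linarith) _)
        (Real.rpow_nonneg (n.cast_nonneg) _)
    · exact ((intervalIntegral.intervalIntegrable_rpow' (r := H - 3/2)
        (by linarith)).const_mul ((n:ℝ) ^ (H - 1/2))).1
    · filter_upwards [ae_restrict_mem measurableSet_Ioc] with v hv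
      have hvpos : 0 < v := hv.1
      apply ContinuousOn.mul continuousOn_const
      apply ContinuousOn.rpow_const (by fun_prop)
      intro x hx
      left
      have : 0 < v + (n:ℝ) - 1 - x := by linarith [hx.2]
      exact ne_of_gt this
  apply key.congr
  intro x _
  exact intervalIntegral.integral_of_le (by norm_num)

lemma intble_outerJ (h1 : 1/2 < H) (h2 : H < 1) {n i : ℕ} (hi : 1 ≤ i) (hin : i + 1 ≤ n) :
    IntervalIntegrable (fun x => x ^ ((1:ℝ)/2 - H) * innerJ H n x) volume ((i:ℝ)-1) (i:ℝ) := by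
  apply IntervalIntegrable.mul_continuousOn
    (intervalIntegral.intervalIntegrable_rpow' (by linarith))
  have h : Set.uIcc ((i:ℝ)-1) (i:ℝ) = Set.Icc ((i:ℝ)-1) (i:ℝ) := Set.uIcc_of_le (by linarith)
  rw [h]
  have hi' : (1:ℝ) ≤ (i:ℝ) := by exact_mod_cast hi
  have hin' : (i:ℝ) + 1 ≤ (n:ℝ) := by exact_mod_cast hin
  exact innerJ_contOn h1 h2 (by linarith) (by linarith)

lemma const_nonneg {σ : ℝ} (h1 : 1/2 < H) (h2 : H < 1) (hσ : 0 ≤ σ) :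
    0 ≤ σ * cH H * (H - 1/2) :=
  mul_nonneg (mul_nonneg hσ (cH_pos h1 h2).le) (by linarith)

lemma jn_nonneg {σ : ℝ} (h1 : 1/2 < H) (h2 : H < 1) (hσ : 0 ≤ σ) {n i : ℕ}
    (hi : 1 ≤ i) (hin : i + 1 ≤ n) : 0 ≤ jn H σ n i := by
  rw [jn_eq]
  apply mul_nonneg (const_nonneg h1 h2 hσ)
  have hi' : (1:ℝ) ≤ (i:ℝ) := by exact_mod_cast hi
  have hin' : (i:ℝ) + 1 ≤ (n:ℝ) := by exact_mod_cast hin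
  apply intervalIntegral.integral_nonneg (by linarith)
  intro x hx
  have hx0 : 0 ≤ x := by linarith [hx.1]
  exact mul_nonneg (Real.rpow_nonneg hx0 _) (innerJ_nonneg hx0 (by linarith [hx.2]))

lemma int_xdelta_le (h1 : 1/2 < H) (h2 : H < 1) {i : ℕ} (hi : 1 ≤ i) :
    ∫ x in ((i:ℝ)-1)..(i:ℝ), x ^ ((1:ℝ)/2 - H) ≤ (3/2 - H)⁻¹ + 1 := by
  have hK2 : (0:ℝ) < (3/2 - H)⁻¹ := by
    apply inv_pos.2; linarith
  rcases eq_or_lt_of_le hi with h | h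
  · have hi1 : (i:ℝ) = 1 := by exact_mod_cast h.symm
    rw [hi1]
    rw [show (1:ℝ) - 1 = 0 by ring]
    rw [integral_rpow (Or.inl (by linarith)), show (1:ℝ)/2 - H + 1 = 3/2 - H by ring,
      Real.one_rpow, Real.zero_rpow (ne_of_gt (by linarith)), sub_zero, one_div]
    linarith
  · have h2i : (2:ℝ) ≤ (i:ℝ) := by exact_mod_cast h
    have key : ∫ x in ((i:ℝ)-1)..(i:ℝ), x ^ ((1:ℝ)/2 - H)
        ≤ ∫ _x in ((i:ℝ)-1)..(i:ℝ), (1:ℝ) := by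
      apply intervalIntegral.integral_mono_on (by linarith)
        (intervalIntegral.intervalIntegrable_rpow' (by linarith)) intervalIntegrable_const
      intro x hx
      exact Real.rpow_le_one_of_one_le_of_nonpos (by linarith [hx.1]) (by linarith)
    simp only [intervalIntegral.integral_const, smul_eq_mul, mul_one] at key
    have : (i:ℝ) - ((i:ℝ) - 1) = 1 := by ring
    rw [this] at key
    linarith

lemma rpow_diff_ge (h1 : 1/2 < H) (h2 : H < 1) {a : ℝ} (ha : 1 ≤ a) :
    (H - 1/2) * (a+1) ^ (H - 3/2) ≤ (a+1) ^ (H - 1/2) - a ^ (H - 1/2) := by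
  have hval : ∫ x in a..(a+1), x ^ (H - 3/2)
      = ((a+1) ^ (H - 1/2) - a ^ (H - 1/2)) / (H - 1/2) := by
    rw [integral_rpow (Or.inl (by linarith)), show H - 3/2 + 1 = H - 1/2 by ring]
  have hmono : (a+1) ^ (H - 3/2) ≤ ∫ x in a..(a+1), x ^ (H - 3/2) := by
    have h := intervalIntegral.integral_mono_on (by linarith : a ≤ a + 1)
      (intervalIntegrable_const (c := (a+1) ^ (H - 3/2)))
      (intervalIntegral.intervalIntegrable_rpow' (r := H - 3/2) (by linarith)) ?_
    · simpa using h
    · intro x hx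
      exact Real.rpow_le_rpow_of_nonpos (by linarith [hx.1]) hx.2 (by linarith)
  rw [hval] at hmono
  have h := (le_div_iff₀ (by linarith : (0:ℝ) < H - 1/2)).1 hmono
  linarith

lemma rpow_diff_le (h1 : 1/2 < H) (h2 : H < 1) {a : ℝ} (ha : 1 ≤ a) :
    (a+1) ^ (H - 1/2) - a ^ (H - 1/2) ≤ (H - 1/2) * a ^ (H - 3/2) := by
  have hval : ∫ x in a..(a+1), x ^ (H - 3/2)
      = ((a+1) ^ (H - 1/2) - a ^ (H - 1/2)) / (H - 1/2) := by
    rw [integral_rpow (Or.inl (by linarith)), show H - 3/2 + 1 = H - 1/2 by ring]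
  have hmono : (∫ x in a..(a+1), x ^ (H - 3/2)) ≤ a ^ (H - 3/2) := by
    have h := intervalIntegral.integral_mono_on (by linarith : a ≤ a + 1)
      (intervalIntegral.intervalIntegrable_rpow' (r := H - 3/2) (by linarith))
      (intervalIntegrable_const (c := a ^ (H - 3/2))) ?_
    · simpa using h
    · intro x hx
      exact Real.rpow_le_rpow_of_nonpos (by linarith) hx.1 (by linarith)
  rw [hval] at hmono
  have h := (div_le_iff₀ (by linarith : (0:ℝ) < H - 1/2)).1 hmono
  linarith

lemma sum_rpow_le (h1 : 1/2 < H) (h2 : H < 1) (n : ℕ) :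
    ∑ m ∈ Finset.Icc 1 n, ((m:ℝ)) ^ (H - 3/2)
      ≤ (1 + (H - 1/2)⁻¹) * (n:ℝ) ^ (H - 1/2) := by
  have hK1 : (0:ℝ) < (H - 1/2)⁻¹ := by apply inv_pos.2; linarith
  induction n with
  | zero =>
    have he : Finset.Icc 1 0 = (∅ : Finset ℕ) := by simp
    rw [he, Finset.sum_empty, Nat.cast_zero]
    exact mul_nonneg (by linarith) (Real.rpow_nonneg le_rfl _)
  | succ n ih =>
    rcases Nat.eq_zero_or_pos n with h0 | hn
    · subst h0
      rw [show (0+1 : ℕ) = 1 from rfl, Finset.Icc_self, Finset.sum_singleton,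
        Nat.cast_one, Real.one_rpow, Real.one_rpow]
      linarith
    · rw [Finset.sum_Icc_succ_top (by omega : 1 ≤ n + 1)]
      have hn1 : (1:ℝ) ≤ (n:ℝ) := by exact_mod_cast hn
      have hd := rpow_diff_ge h1 h2 hn1
      have hd0 : 0 ≤ ((n:ℝ)+1) ^ (H - 1/2) - (n:ℝ) ^ (H - 1/2) := by
        have := Real.rpow_le_rpow (x := (n:ℝ)) (y := (n:ℝ)+1) (by linarith) (by linarith)
          (by linarith : (0:ℝ) ≤ H - 1/2)
        linarith
      have ht : ((n:ℝ)+1) ^ (H - 3/2)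
          ≤ (H - 1/2)⁻¹ * (((n:ℝ)+1) ^ (H - 1/2) - (n:ℝ) ^ (H - 1/2)) := by
        have h' : ((n:ℝ)+1) ^ (H - 3/2)
            ≤ (((n:ℝ)+1) ^ (H - 1/2) - (n:ℝ) ^ (H - 1/2)) / (H - 1/2) :=
          (le_div_iff₀ (by linarith : (0:ℝ) < H - 1/2)).2 (by linarith)
        rw [inv_mul_eq_div]
        exact h'
      push_cast
      have hgoal : (1 + (H - 1/2)⁻¹) * ((n:ℝ)+1) ^ (H - 1/2)
          = (1 + (H - 1/2)⁻¹) * (n:ℝ) ^ (H - 1/2)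
            + (1 + (H - 1/2)⁻¹) * (((n:ℝ)+1) ^ (H - 1/2) - (n:ℝ) ^ (H - 1/2)) := by ring
      rw [hgoal]
      have hmul : (H - 1/2)⁻¹ * (((n:ℝ)+1) ^ (H - 1/2) - (n:ℝ) ^ (H - 1/2))
          ≤ (1 + (H - 1/2)⁻¹) * (((n:ℝ)+1) ^ (H - 1/2) - (n:ℝ) ^ (H - 1/2)) := by
        apply mul_le_mul_of_nonneg_right (by linarith) hd0
      linarith [ih]

lemma sum_rpow_ge (h1 : 1/2 < H) (h2 : H < 1) (n : ℕ) :
    ((n:ℝ)+1) ^ (H - 1/2) * (H - 1/2)⁻¹ - 2 ^ (H - 1/2) * (H - 1/2)⁻¹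
      ≤ ∑ m ∈ Finset.Icc 2 n, ((m:ℝ)) ^ (H - 3/2) := by
  have hK1 : (0:ℝ) < (H - 1/2)⁻¹ := by apply inv_pos.2; linarith
  induction n with
  | zero =>
    simp only [Nat.cast_zero, zero_add, Real.one_rpow]
    have h21 : (1:ℝ) ≤ 2 ^ (H - 1/2) := by
      have := Real.rpow_le_rpow_of_exponent_le (x := 2) (by norm_num)
        (by linarith : (0:ℝ) ≤ H - 1/2)
      rwa [Real.rpow_zero] at this
    have he : Finset.Icc 2 0 = (∅ : Finset ℕ) := by simp
    rw [he, Finset.sum_empty]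
    nlinarith
  | succ n ih =>
    rcases Nat.eq_zero_or_pos n with h0 | hn
    · subst h0
      have he : Finset.Icc 2 1 = (∅ : Finset ℕ) := by simp
      rw [he, Finset.sum_empty]
      norm_num
    · rw [Finset.sum_Icc_succ_top (by omega : 2 ≤ n + 1)]
      have hn1 : (1:ℝ) ≤ (n:ℝ) + 1 := by
        linarith [show (0:ℝ) ≤ (n:ℝ) from Nat.cast_nonneg n]
      have hd := rpow_diff_le h1 h2 hn1
      have ht : (H - 1/2)⁻¹ * ((((n:ℝ)+1)+1) ^ (H - 1/2) - ((n:ℝ)+1) ^ (H - 1/2))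
          ≤ ((n:ℝ)+1) ^ (H - 3/2) := by
        have h' : ((((n:ℝ)+1)+1) ^ (H - 1/2) - ((n:ℝ)+1) ^ (H - 1/2)) / (H - 1/2)
            ≤ ((n:ℝ)+1) ^ (H - 3/2) :=
          (div_le_iff₀ (by linarith : (0:ℝ) < H - 1/2)).2 (by linarith)
        rw [inv_mul_eq_div]
        exact h'
      push_cast
      nlinarith [ih, ht]

lemma jn_le {σ : ℝ} (h1 : 1/2 < H) (h2 : H < 1) (hσ : 0 ≤ σ) {n i : ℕ}
    (hi : 1 ≤ i) (hin : i + 1 ≤ n) :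
    jn H σ n i ≤ σ * cH H * (H - 1/2) *
      (((3/2 - H)⁻¹ + 1) * ((n:ℝ) ^ (H - 1/2) * (H - 1/2)⁻¹)) := by
  rw [jn_eq]
  apply mul_le_mul_of_nonneg_left ?_ (const_nonneg h1 h2 hσ)
  have hi' : (1:ℝ) ≤ (i:ℝ) := by exact_mod_cast hi
  have hin' : (i:ℝ) + 1 ≤ (n:ℝ) := by exact_mod_cast hin
  have M0 : 0 ≤ (n:ℝ) ^ (H - 1/2) * (H - 1/2)⁻¹ :=
    mul_nonneg (Real.rpow_nonneg n.cast_nonneg _) (inv_nonneg.2 (by linarith))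
  have step1 : (∫ x in ((i:ℝ)-1)..(i:ℝ), x ^ ((1:ℝ)/2 - H) * innerJ H n x)
      ≤ ∫ x in ((i:ℝ)-1)..(i:ℝ), x ^ ((1:ℝ)/2 - H) * ((n:ℝ) ^ (H - 1/2) * (H - 1/2)⁻¹) := by
    apply intervalIntegral.integral_mono_on (by linarith) (intble_outerJ h1 h2 hi hin)
      ((intervalIntegral.intervalIntegrable_rpow' (r := (1:ℝ)/2 - H) (by linarith)).mul_const _)
    intro x hx
    have hx0 : 0 ≤ x := by linarith [hx.1]
    exact mul_le_mul_of_nonneg_left (innerJ_le h1 h2 hx0 (by linarith [hx.2]))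
      (Real.rpow_nonneg hx0 _)
  rw [intervalIntegral.integral_mul_const] at step1
  exact le_trans step1 (mul_le_mul_of_nonneg_right (int_xdelta_le h1 h2 hi) M0)

lemma jn_le' {σ : ℝ} (h1 : 1/2 < H) (h2 : H < 1) (hσ : 0 ≤ σ) {n i : ℕ}
    (hi : 1 ≤ i) (hin : i + 2 ≤ n) :
    jn H σ n i ≤ σ * cH H * (H - 1/2) *
      (((3/2 - H)⁻¹ + 1) * ((n:ℝ) ^ (H - 1/2) * ((n:ℝ) - 1 - (i:ℝ)) ^ (H - 3/2))) := by
  rw [jn_eq]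
  apply mul_le_mul_of_nonneg_left ?_ (const_nonneg h1 h2 hσ)
  have hi' : (1:ℝ) ≤ (i:ℝ) := by exact_mod_cast hi
  have hin' : (i:ℝ) + 2 ≤ (n:ℝ) := by exact_mod_cast hin
  have M0 : 0 ≤ (n:ℝ) ^ (H - 1/2) * ((n:ℝ) - 1 - (i:ℝ)) ^ (H - 3/2) :=
    mul_nonneg (Real.rpow_nonneg n.cast_nonneg _) (Real.rpow_nonneg (by linarith) _)
  have step1 : (∫ x in ((i:ℝ)-1)..(i:ℝ), x ^ ((1:ℝ)/2 - H) * innerJ H n x)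
      ≤ ∫ x in ((i:ℝ)-1)..(i:ℝ),
          x ^ ((1:ℝ)/2 - H) * ((n:ℝ) ^ (H - 1/2) * ((n:ℝ) - 1 - (i:ℝ)) ^ (H - 3/2)) := by
    apply intervalIntegral.integral_mono_on (by linarith) (intble_outerJ h1 h2 hi (by omega))
      ((intervalIntegral.intervalIntegrable_rpow' (r := (1:ℝ)/2 - H) (by linarith)).mul_const _)
    intro x hx
    have hx0 : 0 ≤ x := by linarith [hx.1]
    have hb := innerJ_le' h1 h2 (n := n) (c := (n:ℝ) - 1 - (i:ℝ)) hx0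
      (by linarith) (by linarith [hx.2])
    exact mul_le_mul_of_nonneg_left hb (Real.rpow_nonneg hx0 _)
  rw [intervalIntegral.integral_mul_const] at step1
  exact le_trans step1 (mul_le_mul_of_nonneg_right (int_xdelta_le h1 h2 hi) M0)

lemma jn_ge {σ : ℝ} (h1 : 1/2 < H) (h2 : H < 1) (hσ : 0 ≤ σ) {n i : ℕ}
    (hi : 1 ≤ i) (hin : i + 1 ≤ n) :
    σ * cH H * (H - 1/2) * ((n:ℝ) - (i:ℝ) + 1) ^ (H - 3/2) ≤ jn H σ n i := by
  rw [jn_eq]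
  apply mul_le_mul_of_nonneg_left ?_ (const_nonneg h1 h2 hσ)
  have hi' : (1:ℝ) ≤ (i:ℝ) := by exact_mod_cast hi
  have hin' : (i:ℝ) + 1 ≤ (n:ℝ) := by exact_mod_cast hin
  have key := intervalIntegral.integral_mono_ae_restrict (by linarith : (i:ℝ)-1 ≤ (i:ℝ))
    (intervalIntegrable_const (c := ((n:ℝ) - (i:ℝ) + 1) ^ (H - 3/2)))
    (intble_outerJ h1 h2 hi hin) ?_
  · have hc : (∫ _x in ((i:ℝ)-1)..(i:ℝ), ((n:ℝ) - (i:ℝ) + 1) ^ (H - 3/2))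
        = ((n:ℝ) - (i:ℝ) + 1) ^ (H - 3/2) := by
      rw [intervalIntegral.integral_const, smul_eq_mul,
        show (i:ℝ) - ((i:ℝ) - 1) = 1 by ring, one_mul]
    rw [hc] at key
    exact key
  · filter_upwards [ae_restrict_mem measurableSet_Icc, ae_ne_zero_restrict _] with x hx hx0
    have hxpos : 0 < x := lt_of_le_of_ne (by linarith [hx.1]) (Ne.symm hx0)
    have hb := innerJ_ge h1 h2 (n := n) (M := (n:ℝ) - (i:ℝ) + 1) hxpos.le
      (by linarith [hx.2]) (by linarith [hx.1])
    calc ((n:ℝ) - (i:ℝ) + 1) ^ (H - 3/2)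
        = x ^ ((1:ℝ)/2 - H) * (x ^ (H - 1/2) * ((n:ℝ) - (i:ℝ) + 1) ^ (H - 3/2)) := by
          rw [← mul_assoc, ← Real.rpow_add hxpos, show (1:ℝ)/2 - H + (H - 1/2) = 0 by ring,
            Real.rpow_zero, one_mul]
      _ ≤ x ^ ((1:ℝ)/2 - H) * innerJ H n x :=
          mul_le_mul_of_nonneg_left hb (Real.rpow_nonneg hxpos.le _)

lemma sumA_le {σ : ℝ} (h1 : 1/2 < H) (h2 : H < 1) (hσ : 0 ≤ σ) (n : ℕ) :
    ∑ i ∈ Finset.Icc 1 (n-1), jn H σ n i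
      ≤ σ * cH H * (H - 1/2) * (((3/2 - H)⁻¹ + 1) * (2 + 2 * (H - 1/2)⁻¹))
        * ((n:ℝ) ^ (H - 1/2) * (n:ℝ) ^ (H - 1/2)) := by
  have hK1 : (0:ℝ) < (H - 1/2)⁻¹ := by apply inv_pos.2; linarith
  have hK2 : (0:ℝ) < (3/2 - H)⁻¹ := by apply inv_pos.2; linarith
  have hc0 := const_nonneg (σ := σ) h1 h2 hσ
  rcases le_or_gt n 1 with hn | hn
  · have he : Finset.Icc 1 (n-1) = (∅ : Finset ℕ) := by
      have : n - 1 = 0 := by omega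
      rw [this]; simp
    rw [he, Finset.sum_empty]
    have := Real.rpow_nonneg (x := (n:ℝ)) n.cast_nonneg (H - 1/2)
    positivity
  · obtain ⟨m, rfl⟩ : ∃ m, n = m + 2 := ⟨n - 2, by omega⟩
    have hP1 : (1:ℝ) ≤ ((m+2:ℕ):ℝ) ^ (H - 1/2) := by
      have := Real.rpow_le_rpow (x := (1:ℝ)) (y := ((m+2:ℕ):ℝ)) (by norm_num)
        (by push_cast; linarith [show (0:ℝ) ≤ (m:ℝ) from Nat.cast_nonneg m])
        (by linarith : (0:ℝ) ≤ H - 1/2)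
      rwa [Real.one_rpow] at this
    have hP0 : (0:ℝ) ≤ ((m+2:ℕ):ℝ) ^ (H - 1/2) := by linarith
    have hsplit : m + 2 - 1 = m + 1 := by omega
    rw [hsplit, Finset.sum_Icc_succ_top (by omega : 1 ≤ m + 1)]
    have htop : jn H σ (m+2) (m+1) ≤ σ * cH H * (H - 1/2) *
        (((3/2 - H)⁻¹ + 1) * (((m+2:ℕ):ℝ) ^ (H - 1/2) * (H - 1/2)⁻¹)) :=
      jn_le h1 h2 hσ (by omega) (by omega)
    have hrest : ∑ i ∈ Finset.Icc 1 m, jn H σ (m+2) i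
        ≤ σ * cH H * (H - 1/2) * (((3/2 - H)⁻¹ + 1)
          * (((m+2:ℕ):ℝ) ^ (H - 1/2) * ((1 + (H - 1/2)⁻¹) * ((m+2:ℕ):ℝ) ^ (H - 1/2)))) := by
      have hterm : ∀ i ∈ Finset.Icc 1 m, jn H σ (m+2) i
          ≤ σ * cH H * (H - 1/2) * (((3/2 - H)⁻¹ + 1)
            * (((m+2:ℕ):ℝ) ^ (H - 1/2) * (((m+2:ℕ):ℝ) - 1 - (i:ℝ)) ^ (H - 3/2))) := by
        intro i hi
        rw [Finset.mem_Icc] at hi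
        exact jn_le' h1 h2 hσ (by omega) (by omega)
      refine le_trans (Finset.sum_le_sum hterm) ?_
      rw [← Finset.mul_sum]
      apply mul_le_mul_of_nonneg_left ?_ hc0
      rw [← Finset.mul_sum]
      apply mul_le_mul_of_nonneg_left ?_ (by linarith : (0:ℝ) ≤ (3/2 - H)⁻¹ + 1)
      rw [← Finset.mul_sum]
      apply mul_le_mul_of_nonneg_left ?_ hP0
      have reidx : ∑ i ∈ Finset.Icc 1 m, (((m+2:ℕ):ℝ) - 1 - (i:ℝ)) ^ (H - 3/2)
          = ∑ j ∈ Finset.Icc 1 m, ((j:ℝ)) ^ (H - 3/2) := by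
        apply Finset.sum_nbij' (i := fun a => m + 1 - a) (j := fun a => m + 1 - a)
        · intro a ha; rw [Finset.mem_Icc] at *; omega
        · intro a ha; rw [Finset.mem_Icc] at *; omega
        · intro a ha; rw [Finset.mem_Icc] at ha; omega
        · intro a ha; rw [Finset.mem_Icc] at ha; omega
        · intro a ha
          rw [Finset.mem_Icc] at ha
          congr 1
          push_cast [Nat.cast_sub (by omega : a ≤ m + 1)]
          ring
      rw [reidx]
      refine le_trans (sum_rpow_le h1 h2 m) ?_
      apply mul_le_mul_of_nonneg_left ?_ (by linarith : (0:ℝ) ≤ 1 + (H - 1/2)⁻¹)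
      apply Real.rpow_le_rpow (Nat.cast_nonneg m) (by push_cast; linarith) (by linarith)
    set c1 := σ * cH H * (H - 1/2) with hc1
    set B := (3/2 - H)⁻¹ + 1 with hB
    set K1 := (H - 1/2)⁻¹ with hK
    set P := ((m+2:ℕ):ℝ) ^ (H - 1/2) with hPdef
    have h9 : P * ((1 + K1) * P) + P * K1 ≤ (2 + 2 * K1) * (P * P) := by
      have hp2 : P * 1 ≤ P * P := mul_le_mul_of_nonneg_left hP1 hP0
      have hpk : P * 1 * K1 ≤ P * P * K1 := mul_le_mul_of_nonneg_right hp2 hK1.le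
      nlinarith [hpk, mul_nonneg hP0 hP0, hK1.le]
    calc ∑ i ∈ Finset.Icc 1 m, jn H σ (m+2) i + jn H σ (m+2) (m+1)
        ≤ c1 * (B * (P * ((1 + K1) * P))) + c1 * (B * (P * K1)) := by
          exact add_le_add hrest htop
      _ = c1 * B * (P * ((1 + K1) * P) + P * K1) := by ring
      _ ≤ c1 * B * ((2 + 2 * K1) * (P * P)) :=
          mul_le_mul_of_nonneg_left h9 (mul_nonneg hc0 (by rw [hB]; linarith))
      _ = c1 * (B * (2 + 2 * K1)) * (P * P) := by ring

lemma sumA_ge {σ : ℝ} (h1 : 1/2 < H) (h2 : H < 1) (hσ : 0 ≤ σ) {n : ℕ} (hn : 2 ≤ n) :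
    σ * cH H * (((n:ℝ) + 1) ^ (H - 1/2) - 2 ^ (H - 1/2))
      ≤ ∑ i ∈ Finset.Icc 1 (n-1), jn H σ n i := by
  have hK1 : (0:ℝ) < (H - 1/2)⁻¹ := by apply inv_pos.2; linarith
  have hc0 := const_nonneg (σ := σ) h1 h2 hσ
  have hterm : ∀ i ∈ Finset.Icc 1 (n-1),
      σ * cH H * (H - 1/2) * ((n:ℝ) - (i:ℝ) + 1) ^ (H - 3/2) ≤ jn H σ n i := by
    intro i hi
    rw [Finset.mem_Icc] at hi
    exact jn_ge h1 h2 hσ (by omega) (by omega)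
  refine le_trans ?_ (Finset.sum_le_sum hterm)
  rw [← Finset.mul_sum]
  have reidx : ∑ i ∈ Finset.Icc 1 (n-1), ((n:ℝ) - (i:ℝ) + 1) ^ (H - 3/2)
      = ∑ j ∈ Finset.Icc 2 n, ((j:ℝ)) ^ (H - 3/2) := by
    apply Finset.sum_nbij' (i := fun a => n + 1 - a) (j := fun a => n + 1 - a)
    · intro a ha; rw [Finset.mem_Icc] at *; omega
    · intro a ha; rw [Finset.mem_Icc] at *; omega
    · intro a ha; rw [Finset.mem_Icc] at ha; omega
    · intro a ha; rw [Finset.mem_Icc] at ha; omega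
    · intro a ha
      rw [Finset.mem_Icc] at ha
      congr 1
      push_cast [Nat.cast_sub (by omega : a ≤ n + 1)]
      ring
  rw [reidx]
  have hsum := sum_rpow_ge h1 h2 n
  have hmul : σ * cH H * (H - 1/2) * (((n:ℝ)+1) ^ (H - 1/2) * (H - 1/2)⁻¹
      - 2 ^ (H - 1/2) * (H - 1/2)⁻¹)
      = σ * cH H * (((n:ℝ)+1) ^ (H - 1/2) - 2 ^ (H - 1/2)) := by
    have hne : (H - 1/2) ≠ 0 := ne_of_gt (by linarith)
    have hinv : (H - 1/2) * (H - 1/2)⁻¹ = 1 := mul_inv_cancel₀ hne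
    calc σ * cH H * (H - 1/2) * (((n:ℝ)+1) ^ (H - 1/2) * (H - 1/2)⁻¹
        - 2 ^ (H - 1/2) * (H - 1/2)⁻¹)
        = σ * cH H * ((H - 1/2) * (H - 1/2)⁻¹)
          * (((n:ℝ)+1) ^ (H - 1/2) - 2 ^ (H - 1/2)) := by ring
      _ = σ * cH H * (((n:ℝ)+1) ^ (H - 1/2) - 2 ^ (H - 1/2)) := by rw [hinv, mul_one]
  calc σ * cH H * (((n:ℝ) + 1) ^ (H - 1/2) - 2 ^ (H - 1/2))
      = σ * cH H * (H - 1/2) * (((n:ℝ)+1) ^ (H - 1/2) * (H - 1/2)⁻¹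
        - 2 ^ (H - 1/2) * (H - 1/2)⁻¹) := hmul.symm
    _ ≤ σ * cH H * (H - 1/2) * ∑ j ∈ Finset.Icc 2 n, ((j:ℝ)) ^ (H - 3/2) :=
        mul_le_mul_of_nonneg_left hsum hc0

/-- inner integral of `gn` as a function of the outer variable. -/
noncomputable def innerG (H : ℝ) (n : ℕ) (x : ℝ) : ℝ :=
  ∫ y in (0:ℝ)..1, (y * ((n : ℝ) - x) + x) ^ (H - 1/2) * y ^ (H - 3/2)

lemma gn_eq (H σ : ℝ) (n : ℕ) :
    gn H σ n = σ * cH H * (H - 1/2) *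
      ∫ x in ((n : ℝ) - 1)..(n : ℝ),
        x ^ ((1:ℝ)/2 - H) * ((n : ℝ) - x) ^ (H - 1/2) * innerG H n x := rfl

lemma intble_innerG (h1 : 1/2 < H) (n : ℕ) (x : ℝ) :
    IntervalIntegrable (fun y => (y * ((n:ℝ) - x) + x) ^ (H - 1/2) * y ^ (H - 3/2))
      volume 0 1 := by
  apply IntervalIntegrable.continuousOn_mul
    (intervalIntegral.intervalIntegrable_rpow' (r := H - 3/2) (by linarith))
  apply ContinuousOn.rpow_const (by fun_prop)
  intro y _
  right
  linarith

lemma innerG_nonneg {n : ℕ} {x : ℝ} (hx0 : 0 ≤ x) (hxn : x ≤ (n:ℝ)) :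
    0 ≤ innerG H n x := by
  apply intervalIntegral.integral_nonneg (by norm_num)
  intro y hy
  have : 0 ≤ y * ((n:ℝ) - x) := mul_nonneg hy.1 (by linarith)
  exact mul_nonneg (Real.rpow_nonneg (by linarith) _) (Real.rpow_nonneg hy.1 _)

lemma innerG_le (h1 : 1/2 < H) (h2 : H < 1) {n : ℕ} {x : ℝ} (hx0 : 0 ≤ x)
    (hxn : x ≤ (n:ℝ)) :
    innerG H n x ≤ (n:ℝ) ^ (H - 1/2) * (H - 1/2)⁻¹ := by
  have key : innerG H n x ≤ ∫ y in (0:ℝ)..1, (n:ℝ) ^ (H - 1/2) * y ^ (H - 3/2) := by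
    apply intervalIntegral.integral_mono_on (by norm_num) (intble_innerG h1 n x)
      ((intervalIntegral.intervalIntegrable_rpow' (by linarith)).const_mul _)
    intro y hy
    have hb0 : 0 ≤ y * ((n:ℝ) - x) := mul_nonneg hy.1 (by linarith)
    have hb1 : y * ((n:ℝ) - x) + x ≤ (n:ℝ) := by nlinarith [hy.1, hy.2]
    have b1 : (y * ((n:ℝ) - x) + x) ^ (H - 1/2) ≤ (n:ℝ) ^ (H - 1/2) :=
      Real.rpow_le_rpow (by linarith) hb1 (by linarith)
    exact mul_le_mul_of_nonneg_right b1 (Real.rpow_nonneg hy.1 _)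
  have hval : (∫ y in (0:ℝ)..1, (n:ℝ) ^ (H - 1/2) * y ^ (H - 3/2))
      = (n:ℝ) ^ (H - 1/2) * (H - 1/2)⁻¹ := by
    rw [intervalIntegral.integral_const_mul, integral_rpow (Or.inl (by linarith)),
      show H - 3/2 + 1 = H - 1/2 by ring, Real.one_rpow,
      Real.zero_rpow (ne_of_gt (by linarith)), sub_zero, one_div]
    norm_num
  rw [hval] at key
  exact key

lemma innerG_contOn (h1 : 1/2 < H) {n : ℕ} (hn : 1 ≤ n) {a b : ℝ} (ha : 0 ≤ a)
    (hb : b ≤ (n:ℝ)) :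
    ContinuousOn (innerG H n) (Set.Icc a b) := by
  have hn1 : (1:ℝ) ≤ (n:ℝ) := by exact_mod_cast hn
  have key : ContinuousOn (fun x => ∫ y in Set.Ioc (0:ℝ) 1,
      ((y * ((n:ℝ) - x) + x) ^ (H - 1/2) * y ^ (H - 3/2)) ∂volume) (Set.Icc a b) := by
    apply MeasureTheory.continuousOn_of_dominated
      (bound := fun y => (n:ℝ) ^ (H - 1/2) * y ^ (H - 3/2))
    · intro x _
      exact (intble_innerG h1 n x).1.1
    · intro x hx
      filter_upwards [ae_restrict_mem measurableSet_Ioc] with y hy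
      have hypos : 0 < y := hy.1
      have hx0 : 0 ≤ x := le_trans ha hx.1
      have hxn : x ≤ (n:ℝ) := le_trans hx.2 hb
      have hb0 : 0 ≤ y * ((n:ℝ) - x) := mul_nonneg hypos.le (by linarith)
      rw [Real.norm_eq_abs, abs_of_nonneg (mul_nonneg (Real.rpow_nonneg (by linarith) _)
        (Real.rpow_nonneg hypos.le _))]
      have hb1 : y * ((n:ℝ) - x) + x ≤ (n:ℝ) := by nlinarith [hy.2]
      have b1 : (y * ((n:ℝ) - x) + x) ^ (H - 1/2) ≤ (n:ℝ) ^ (H - 1/2) :=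
        Real.rpow_le_rpow (by linarith) hb1 (by linarith)
      exact mul_le_mul_of_nonneg_right b1 (Real.rpow_nonneg hypos.le _)
    · exact ((intervalIntegral.intervalIntegrable_rpow' (r := H - 3/2)
        (by linarith)).const_mul ((n:ℝ) ^ (H - 1/2))).1
    · filter_upwards [ae_restrict_mem measurableSet_Ioc] with y hy
      have hypos : 0 < y := hy.1
      apply ContinuousOn.mul ?_ continuousOn_const
      apply ContinuousOn.rpow_const (by fun_prop)
      intro x hx
      left
      have hx0 : 0 ≤ x := le_trans ha hx.1
      have hxn : x ≤ (n:ℝ) := le_trans hx.2 hb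
      have : (n:ℝ) * y ≤ y * ((n:ℝ) - x) + x := by nlinarith [hy.2]
      have : 0 < y * ((n:ℝ) - x) + x := by nlinarith
      exact ne_of_gt this
  apply key.congr
  intro x _
  exact intervalIntegral.integral_of_le (by norm_num)

lemma gn_nonneg {σ : ℝ} (h1 : 1/2 < H) (h2 : H < 1) (hσ : 0 ≤ σ) {n : ℕ} (hn : 1 ≤ n) :
    0 ≤ gn H σ n := by
  rw [gn_eq]
  apply mul_nonneg (const_nonneg h1 h2 hσ)
  have hn1 : (1:ℝ) ≤ (n:ℝ) := by exact_mod_cast hn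
  apply intervalIntegral.integral_nonneg (by linarith)
  intro x hx
  have hx0 : 0 ≤ x := by linarith [hx.1]
  exact mul_nonneg (mul_nonneg (Real.rpow_nonneg hx0 _)
    (Real.rpow_nonneg (by linarith [hx.2]) _)) (innerG_nonneg hx0 (by linarith [hx.2]))

lemma intble_outerG (h1 : 1/2 < H) (h2 : H < 1) {n : ℕ} (hn : 1 ≤ n) :
    IntervalIntegrable
      (fun x => x ^ ((1:ℝ)/2 - H) * ((n:ℝ) - x) ^ (H - 1/2) * innerG H n x)
      volume ((n:ℝ)-1) (n:ℝ) := by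
  have hn1 : (1:ℝ) ≤ (n:ℝ) := by exact_mod_cast hn
  have heq : (fun x => x ^ ((1:ℝ)/2 - H) * ((n:ℝ) - x) ^ (H - 1/2) * innerG H n x)
      = fun x => x ^ ((1:ℝ)/2 - H) * (((n:ℝ) - x) ^ (H - 1/2) * innerG H n x) := by
    funext x; ring
  rw [heq]
  apply IntervalIntegrable.mul_continuousOn
    (intervalIntegral.intervalIntegrable_rpow' (by linarith))
  have h : Set.uIcc ((n:ℝ)-1) (n:ℝ) = Set.Icc ((n:ℝ)-1) (n:ℝ) := Set.uIcc_of_le (by linarith)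
  rw [h]
  apply ContinuousOn.mul
  · apply ContinuousOn.rpow_const (by fun_prop)
    intro x _
    right
    linarith
  · exact innerG_contOn h1 hn (by linarith) le_rfl

lemma gn_le1 {σ : ℝ} (h1 : 1/2 < H) (h2 : H < 1) (hσ : 0 ≤ σ) :
    gn H σ 1 ≤ σ * cH H * (3/2 - H)⁻¹ := by
  rw [gn_eq]
  have hK1 : (0:ℝ) < (H - 1/2)⁻¹ := by apply inv_pos.2; linarith
  have hcast : ((1:ℕ):ℝ) = 1 := by norm_num
  have key : (∫ x in (((1:ℕ):ℝ)-1)..((1:ℕ):ℝ),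
      x ^ ((1:ℝ)/2 - H) * (((1:ℕ):ℝ) - x) ^ (H - 1/2) * innerG H 1 x)
      ≤ ∫ x in (((1:ℕ):ℝ)-1)..((1:ℕ):ℝ), x ^ ((1:ℝ)/2 - H) * (H - 1/2)⁻¹ := by
    apply intervalIntegral.integral_mono_on (by rw [hcast]; norm_num)
      (intble_outerG h1 h2 le_rfl)
      ((intervalIntegral.intervalIntegrable_rpow' (r := (1:ℝ)/2 - H) (by linarith)).mul_const _)
    intro x hx
    rw [hcast] at hx
    have hx0 : 0 ≤ x := by linarith [hx.1]
    have hx1 : x ≤ 1 := by linarith [hx.2]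
    have hb : innerG H 1 x ≤ (H - 1/2)⁻¹ := by
      have := innerG_le h1 h2 (n := 1) hx0 (by rw [hcast]; linarith)
      rwa [hcast, Real.one_rpow, one_mul] at this
    have hb2 : (((1:ℕ):ℝ) - x) ^ (H - 1/2) ≤ 1 := by
      rw [hcast]
      exact Real.rpow_le_one (by linarith) (by linarith) (by linarith)
    have hinn0 : 0 ≤ innerG H 1 x := innerG_nonneg hx0 (by rw [hcast]; linarith)
    calc x ^ ((1:ℝ)/2 - H) * (((1:ℕ):ℝ) - x) ^ (H - 1/2) * innerG H 1 x
        ≤ x ^ ((1:ℝ)/2 - H) * 1 * (H - 1/2)⁻¹ := by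
          apply mul_le_mul (mul_le_mul_of_nonneg_left hb2 (Real.rpow_nonneg hx0 _)) hb hinn0
          exact mul_nonneg (Real.rpow_nonneg hx0 _) zero_le_one
      _ = x ^ ((1:ℝ)/2 - H) * (H - 1/2)⁻¹ := by ring
  have hval : (∫ x in (((1:ℕ):ℝ)-1)..((1:ℕ):ℝ), x ^ ((1:ℝ)/2 - H) * (H - 1/2)⁻¹)
      = (3/2 - H)⁻¹ * (H - 1/2)⁻¹ := by
    rw [hcast, intervalIntegral.integral_mul_const, show (1:ℝ) - 1 = 0 by ring,
      integral_rpow (Or.inl (by linarith)), show (1:ℝ)/2 - H + 1 = 3/2 - H by ring,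
      Real.one_rpow, Real.zero_rpow (ne_of_gt (by linarith)), sub_zero, one_div]
  rw [hval] at key
  have hinv : (H - 1/2) * (H - 1/2)⁻¹ = 1 := mul_inv_cancel₀ (ne_of_gt (by linarith))
  calc σ * cH H * (H - 1/2) *
      (∫ x in (((1:ℕ):ℝ)-1)..((1:ℕ):ℝ),
        x ^ ((1:ℝ)/2 - H) * (((1:ℕ):ℝ) - x) ^ (H - 1/2) * innerG H 1 x)
      ≤ σ * cH H * (H - 1/2) * ((3/2 - H)⁻¹ * (H - 1/2)⁻¹) :=
        mul_le_mul_of_nonneg_left key (const_nonneg h1 h2 hσ)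
    _ = σ * cH H * (3/2 - H)⁻¹ * ((H - 1/2) * (H - 1/2)⁻¹) := by ring
    _ = σ * cH H * (3/2 - H)⁻¹ := by rw [hinv, mul_one]

lemma gn_le2 {σ : ℝ} (h1 : 1/2 < H) (h2 : H < 1) (hσ : 0 ≤ σ) {n : ℕ} (hn : 2 ≤ n) :
    gn H σ n ≤ σ * cH H * 2 := by
  rw [gn_eq]
  have hK1 : (0:ℝ) < (H - 1/2)⁻¹ := by apply inv_pos.2; linarith
  have hn2 : (2:ℝ) ≤ (n:ℝ) := by exact_mod_cast hn
  have hM0 : (0:ℝ) ≤ ((n:ℝ)-1) ^ ((1:ℝ)/2 - H) * ((n:ℝ) ^ (H - 1/2) * (H - 1/2)⁻¹) :=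
    mul_nonneg (Real.rpow_nonneg (by linarith) _)
      (mul_nonneg (Real.rpow_nonneg n.cast_nonneg _) hK1.le)
  have key : (∫ x in ((n:ℝ)-1)..(n:ℝ),
      x ^ ((1:ℝ)/2 - H) * ((n:ℝ) - x) ^ (H - 1/2) * innerG H n x)
      ≤ ∫ _x in ((n:ℝ)-1)..(n:ℝ),
        ((n:ℝ)-1) ^ ((1:ℝ)/2 - H) * ((n:ℝ) ^ (H - 1/2) * (H - 1/2)⁻¹) := by
    apply intervalIntegral.integral_mono_on (by linarith)
      (intble_outerG h1 h2 (by omega)) intervalIntegrable_const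
    intro x hx
    have hx0 : 0 ≤ x := by linarith [hx.1]
    have hxn : x ≤ (n:ℝ) := hx.2
    have b1 : x ^ ((1:ℝ)/2 - H) ≤ ((n:ℝ)-1) ^ ((1:ℝ)/2 - H) :=
      Real.rpow_le_rpow_of_nonpos (by linarith) hx.1 (by linarith)
    have b2 : ((n:ℝ) - x) ^ (H - 1/2) ≤ 1 :=
      Real.rpow_le_one (by linarith) (by linarith [hx.1]) (by linarith)
    have b3 : innerG H n x ≤ (n:ℝ) ^ (H - 1/2) * (H - 1/2)⁻¹ := innerG_le h1 h2 hx0 hxn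
    have hinn0 : 0 ≤ innerG H n x := innerG_nonneg hx0 hxn
    calc x ^ ((1:ℝ)/2 - H) * ((n:ℝ) - x) ^ (H - 1/2) * innerG H n x
        ≤ ((n:ℝ)-1) ^ ((1:ℝ)/2 - H) * 1 * ((n:ℝ) ^ (H - 1/2) * (H - 1/2)⁻¹) := by
          apply mul_le_mul ?_ b3 hinn0
            (mul_nonneg (Real.rpow_nonneg (by linarith) _) zero_le_one)
          apply mul_le_mul b1 b2 (Real.rpow_nonneg (by linarith) _)
            (Real.rpow_nonneg (by linarith) _)
      _ = ((n:ℝ)-1) ^ ((1:ℝ)/2 - H) * ((n:ℝ) ^ (H - 1/2) * (H - 1/2)⁻¹) := by ring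
  have hval : (∫ _x in ((n:ℝ)-1)..(n:ℝ),
      ((n:ℝ)-1) ^ ((1:ℝ)/2 - H) * ((n:ℝ) ^ (H - 1/2) * (H - 1/2)⁻¹))
      = ((n:ℝ)-1) ^ ((1:ℝ)/2 - H) * ((n:ℝ) ^ (H - 1/2) * (H - 1/2)⁻¹) := by
    rw [intervalIntegral.integral_const, smul_eq_mul,
      show (n:ℝ) - ((n:ℝ) - 1) = 1 by ring, one_mul]
  rw [hval] at key
  have hprod : ((n:ℝ)-1) ^ ((1:ℝ)/2 - H) * (n:ℝ) ^ (H - 1/2) ≤ 2 := by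
    have hmul : (n:ℝ) ^ (H - 1/2) ≤ 2 ^ (H - 1/2) * ((n:ℝ)-1) ^ (H - 1/2) := by
      rw [← Real.mul_rpow (by norm_num) (by linarith)]
      exact Real.rpow_le_rpow (by linarith) (by linarith) (by linarith)
    have h2b : (2:ℝ) ^ (H - 1/2) ≤ 2 := by
      have := Real.rpow_le_rpow_of_exponent_le (x := 2) (by norm_num)
        (by linarith : H - 1/2 ≤ 1)
      rwa [Real.rpow_one] at this
    have hres : ((n:ℝ)-1) ^ ((1:ℝ)/2 - H) * ((n:ℝ)-1) ^ (H - 1/2) = 1 := by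
      rw [← Real.rpow_add (by linarith), show (1:ℝ)/2 - H + (H - 1/2) = 0 by ring,
        Real.rpow_zero]
    calc ((n:ℝ)-1) ^ ((1:ℝ)/2 - H) * (n:ℝ) ^ (H - 1/2)
        ≤ ((n:ℝ)-1) ^ ((1:ℝ)/2 - H) * (2 ^ (H - 1/2) * ((n:ℝ)-1) ^ (H - 1/2)) :=
          mul_le_mul_of_nonneg_left hmul (Real.rpow_nonneg (by linarith) _)
      _ = 2 ^ (H - 1/2) * (((n:ℝ)-1) ^ ((1:ℝ)/2 - H) * ((n:ℝ)-1) ^ (H - 1/2)) := by ring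
      _ = 2 ^ (H - 1/2) := by rw [hres, mul_one]
      _ ≤ 2 := h2b
  have hinv : (H - 1/2) * (H - 1/2)⁻¹ = 1 := mul_inv_cancel₀ (ne_of_gt (by linarith))
  calc σ * cH H * (H - 1/2) *
      (∫ x in ((n:ℝ)-1)..(n:ℝ),
        x ^ ((1:ℝ)/2 - H) * ((n:ℝ) - x) ^ (H - 1/2) * innerG H n x)
      ≤ σ * cH H * (H - 1/2)
        * (((n:ℝ)-1) ^ ((1:ℝ)/2 - H) * ((n:ℝ) ^ (H - 1/2) * (H - 1/2)⁻¹)) :=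
        mul_le_mul_of_nonneg_left key (const_nonneg h1 h2 hσ)
    _ = σ * cH H * ((H - 1/2) * (H - 1/2)⁻¹)
        * (((n:ℝ)-1) ^ ((1:ℝ)/2 - H) * (n:ℝ) ^ (H - 1/2)) := by ring
    _ = σ * cH H * (((n:ℝ)-1) ^ ((1:ℝ)/2 - H) * (n:ℝ) ^ (H - 1/2)) := by
        rw [hinv, mul_one]
    _ ≤ σ * cH H * 2 :=
        mul_le_mul_of_nonneg_left hprod (mul_nonneg hσ (cH_pos h1 h2).le)

lemma gn_le {σ : ℝ} (h1 : 1/2 < H) (h2 : H < 1) (hσ : 0 ≤ σ) {n : ℕ} (hn : 1 ≤ n) :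
    gn H σ n ≤ σ * cH H * ((3/2 - H)⁻¹ + 2) := by
  have hc : 0 ≤ σ * cH H := mul_nonneg hσ (cH_pos h1 h2).le
  have hK2 : (0:ℝ) < (3/2 - H)⁻¹ := by apply inv_pos.2; linarith
  rcases eq_or_lt_of_le hn with h | h
  · rw [← h]
    refine le_trans (gn_le1 h1 h2 hσ) ?_
    nlinarith
  · refine le_trans (gn_le2 h1 h2 hσ h) ?_
    nlinarith

lemma Sp_const_neg (H σ : ℝ) (N : ℕ) (s₀ : ℝ) (n : ℕ) :
    Sp H σ N s₀ n (fun _ => -1) = s₀ * ∏ k ∈ Finset.Icc 1 n,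
      (1 - ((∑ i ∈ Finset.Icc 1 (k - 1), jn H σ k i) + gn H σ k) / (N : ℝ) ^ H) := by
  unfold Sp
  congr 1
  apply Finset.prod_congr rfl
  intro k _
  have hs : ∑ i ∈ Finset.Icc 1 (k - 1), jn H σ k i * (-1)
      = -∑ i ∈ Finset.Icc 1 (k - 1), jn H σ k i := by
    rw [← Finset.sum_neg_distrib]
    apply Finset.sum_congr rfl
    intro i _
    ring
  rw [hs]
  ring

lemma Sp_split (H σ : ℝ) {N : ℕ} (hN : 1 ≤ N) (s₀ x : ℝ) :
    Sp H σ N s₀ N (fun i => if i = N then x else -1)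
      = Sp H σ N s₀ (N-1) (fun _ => -1)
        * (1 + (-(∑ i ∈ Finset.Icc 1 (N-1), jn H σ N i) + gn H σ N * x) / (N:ℝ)^H) := by
  unfold Sp
  simp only []
  obtain ⟨M, rfl⟩ : ∃ M, N = M + 1 := ⟨N - 1, by omega⟩
  rw [show M + 1 - 1 = M by omega]
  rw [Finset.prod_Icc_succ_top (by omega : 1 ≤ M + 1)]
  have hpath : ∀ k ∈ Finset.Icc 1 M,
      (1 + ((∑ i ∈ Finset.Icc 1 (k-1), jn H σ k i * (if i = M+1 then x else -1))
        + gn H σ k * (if k = M+1 then x else -1)) / ((M+1:ℕ):ℝ)^H)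
      = (1 + ((∑ i ∈ Finset.Icc 1 (k-1), jn H σ k i * (-1))
        + gn H σ k * (-1)) / ((M+1:ℕ):ℝ)^H) := by
    intro k hk
    rw [Finset.mem_Icc] at hk
    have h1 : (if k = M+1 then x else (-1:ℝ)) = -1 := if_neg (by omega)
    have h2 : ∑ i ∈ Finset.Icc 1 (k-1), jn H σ k i * (if i = M+1 then x else -1)
        = ∑ i ∈ Finset.Icc 1 (k-1), jn H σ k i * (-1) := by
      apply Finset.sum_congr rfl
      intro i hi
      rw [Finset.mem_Icc] at hi
      rw [if_neg (by omega)]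
    rw [h1, h2]
  rw [Finset.prod_congr rfl hpath]
  have hl1 : (if M+1 = M+1 then x else (-1:ℝ)) = x := if_pos rfl
  have hl2 : ∑ i ∈ Finset.Icc 1 (M+1-1), jn H σ (M+1) i * (if i = M+1 then x else -1)
      = -∑ i ∈ Finset.Icc 1 (M+1-1), jn H σ (M+1) i := by
    rw [← Finset.sum_neg_distrib]
    apply Finset.sum_congr rfl
    intro i hi
    rw [Finset.mem_Icc] at hi
    rw [if_neg (by omega)]
    ring
  rw [hl1, hl2, show M + 1 - 1 = M by omega]
  ring

end OneStepAux

set_option maxHeartbeats 1000000 in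
open OneStepAux in
/-- Theorem 3.1 (`Sot`): if `λ_N = o(1/√N)`, then for all `N` big enough the 1-step
strategy which short-sells one unit of stock at time `N-1` on the all-down path and
liquidates at time `N` is a `λ_N`-arbitrage in the `N`-fractional binary market. -/
theorem one_step_arbitrage_small_costs (H σ : ℝ) (hH : H ∈ Set.Ioo (1/2 : ℝ) 1)
    (hσ : 0 < σ) (s₀ : ℝ) (hs₀ : 0 < s₀) (lam : ℕ → ℝ)
    (hlam : ∀ N, lam N ∈ Set.Icc (0:ℝ) 1)
    (hlim : Filter.Tendsto (fun N : ℕ => lam N * Real.sqrt N) Filter.atTop (nhds 0)) :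
    ∃ N₀ : ℕ, ∀ N : ℕ, N₀ ≤ N →
      (∀ k : ℕ, k ≤ N → 0 < Sp H σ N s₀ k (fun _ => -1)) ∧
      (∀ x : ℝ, x = -1 ∨ x = 1 →
        0 ≤ (1 - lam N) * Sp H σ N s₀ (N - 1) (fun _ => -1)
            - Sp H σ N s₀ N (fun i => if i = N then x else -1)) ∧
      0 < (1 - lam N) * Sp H σ N s₀ (N - 1) (fun _ => -1)
          - Sp H σ N s₀ N (fun _ => -1) := by
  obtain ⟨h1, h2⟩ := hH
  have hcH : 0 < cH H := cH_pos h1 h2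
  have hscH : 0 < σ * cH H := mul_pos hσ hcH
  set CA : ℝ := σ * cH H * (H - 1/2) * (((3/2 - H)⁻¹ + 1) * (2 + 2 * (H - 1/2)⁻¹)) with hCA
  set G : ℝ := σ * cH H * ((3/2 - H)⁻¹ + 2) with hG
  have hG0 : 0 < G := by
    have : (0:ℝ) < (3/2 - H)⁻¹ := by apply inv_pos.2; linarith
    rw [hG]; nlinarith
  -- eventual facts
  have F1 : ∀ᶠ N : ℕ in Filter.atTop, CA * (N:ℝ)^(H-1) ≤ 1/4 := by
    have t0 : Filter.Tendsto (fun y : ℝ => y ^ (-(1-H))) Filter.atTop (nhds 0) :=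
      tendsto_rpow_neg_atTop (by linarith)
    have t1 : Filter.Tendsto (fun N : ℕ => ((N:ℝ)) ^ (H-1)) Filter.atTop (nhds 0) := by
      have := t0.comp (tendsto_natCast_atTop_atTop (R := ℝ))
      simpa [show -(1-H) = H - 1 by ring, Function.comp_def] using this
    have t2 : Filter.Tendsto (fun N : ℕ => CA * ((N:ℝ)) ^ (H-1)) Filter.atTop (nhds 0) := by
      simpa using t1.const_mul CA
    exact t2.eventually_le_const (by norm_num)
  have F2 : ∀ᶠ N : ℕ in Filter.atTop, 4 * G + 4 ≤ (N:ℝ)^H := by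
    have t0 : Filter.Tendsto (fun N : ℕ => ((N:ℝ)) ^ H) Filter.atTop Filter.atTop :=
      (tendsto_rpow_atTop (by linarith)).comp (tendsto_natCast_atTop_atTop (R := ℝ))
    exact t0.eventually_ge_atTop _
  have F3 : ∀ᶠ N : ℕ in Filter.atTop, lam N * Real.sqrt N ≤ σ * cH H / 2 :=
    hlim.eventually_le_const (by linarith)
  have F4 : ∀ᶠ N : ℕ in Filter.atTop,
      G + 2 * (σ * cH H) + 1 ≤ σ * cH H / 2 * (N:ℝ)^(H-1/2) := by
    have t0 : Filter.Tendsto (fun N : ℕ => ((N:ℝ)) ^ (H-1/2)) Filter.atTop Filter.atTop :=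
      (tendsto_rpow_atTop (by linarith)).comp (tendsto_natCast_atTop_atTop (R := ℝ))
    have t1 := t0.const_mul_atTop (by linarith : (0:ℝ) < σ * cH H / 2)
    exact t1.eventually_ge_atTop _
  have F5 : ∀ᶠ N : ℕ in Filter.atTop, 2 ≤ N := Filter.eventually_ge_atTop 2
  obtain ⟨N₀, hN₀⟩ := Filter.eventually_atTop.1 (F1.and (F2.and (F3.and (F4.and F5))))
  refine ⟨N₀, fun N hN => ?_⟩
  obtain ⟨e1, e2, e3, e4, e5⟩ := hN₀ N hN
  have hN1 : 1 ≤ N := by omega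
  have hNpos : (0:ℝ) < (N:ℝ) := by exact_mod_cast (by omega : 0 < N)
  have hNH : (0:ℝ) < (N:ℝ)^H := Real.rpow_pos_of_pos hNpos H
  -- bound on the drift of each factor
  have hD : ∀ k : ℕ, 1 ≤ k → k ≤ N →
      (∑ i ∈ Finset.Icc 1 (k-1), jn H σ k i) + gn H σ k ≤ 1/2 * (N:ℝ)^H := by
    intro k hk1 hkN
    have hkr : (k:ℝ) ≤ (N:ℝ) := by exact_mod_cast hkN
    have hA := sumA_le (σ := σ) h1 h2 hσ.le k
    have hmonok : (k:ℝ)^(H-1/2) ≤ (N:ℝ)^(H-1/2) :=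
      Real.rpow_le_rpow k.cast_nonneg hkr (by linarith)
    have hk0 : (0:ℝ) ≤ (k:ℝ)^(H-1/2) := Real.rpow_nonneg k.cast_nonneg _
    have hN0' : (0:ℝ) ≤ (N:ℝ)^(H-1/2) := Real.rpow_nonneg N.cast_nonneg _
    have hCA0 : 0 ≤ CA := by
      have hK1 : (0:ℝ) < (H - 1/2)⁻¹ := by apply inv_pos.2; linarith
      have hK2 : (0:ℝ) < (3/2 - H)⁻¹ := by apply inv_pos.2; linarith
      rw [hCA]
      apply mul_nonneg (mul_nonneg hscH.le (by linarith))
        (mul_nonneg (by linarith) (by linarith))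
    have hsq : (k:ℝ)^(H-1/2) * (k:ℝ)^(H-1/2) ≤ (N:ℝ)^(H-1/2) * (N:ℝ)^(H-1/2) :=
      mul_le_mul hmonok hmonok hk0 hN0'
    have hid : (N:ℝ)^(H-1/2) * (N:ℝ)^(H-1/2) = (N:ℝ)^(H-1) * (N:ℝ)^H := by
      rw [← Real.rpow_add hNpos, ← Real.rpow_add hNpos]
      congr 1
      ring
    have hA2 : (∑ i ∈ Finset.Icc 1 (k-1), jn H σ k i) ≤ CA * ((N:ℝ)^(H-1) * (N:ℝ)^H) := by
      refine le_trans hA ?_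
      rw [← hid]
      exact mul_le_mul_of_nonneg_left hsq hCA0
    have hA3 : CA * ((N:ℝ)^(H-1) * (N:ℝ)^H) ≤ 1/4 * (N:ℝ)^H := by
      rw [← mul_assoc]
      exact mul_le_mul_of_nonneg_right e1 hNH.le
    have hg := gn_le (σ := σ) h1 h2 hσ.le hk1
    rw [← hG] at hg
    linarith
  -- (i) positivity of the price on the all-down path
  have hpos : ∀ k : ℕ, k ≤ N → 0 < Sp H σ N s₀ k (fun _ => -1) := by
    intro k hkN
    rw [Sp_const_neg]
    apply mul_pos hs₀
    apply Finset.prod_pos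
    intro j hj
    rw [Finset.mem_Icc] at hj
    have hDj := hD j hj.1 (le_trans hj.2 hkN)
    have : ((∑ i ∈ Finset.Icc 1 (j-1), jn H σ j i) + gn H σ j) / (N:ℝ)^H ≤ 1/2 := by
      rw [div_le_iff₀ hNH]
      linarith
    linarith
  refine ⟨hpos, ?_⟩
  -- key quantitative estimate
  have hA := sumA_ge (σ := σ) h1 h2 hσ.le e5
  have hmono1 : (N:ℝ)^(H-1/2) ≤ ((N:ℝ)+1)^(H-1/2) :=
    Real.rpow_le_rpow N.cast_nonneg (by linarith) (by linarith)
  have h2b : (2:ℝ)^(H-1/2) ≤ 2 := by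
    have := Real.rpow_le_rpow_of_exponent_le (x := 2) (by norm_num)
      (by linarith : H - 1/2 ≤ 1)
    rwa [Real.rpow_one] at this
  have hA' : σ * cH H * ((N:ℝ)^(H-1/2) - 2) ≤ ∑ i ∈ Finset.Icc 1 (N-1), jn H σ N i := by
    refine le_trans ?_ hA
    apply mul_le_mul_of_nonneg_left ?_ hscH.le
    linarith
  have hg := gn_le (σ := σ) h1 h2 hσ.le hN1
  rw [← hG] at hg
  have hg0 := gn_nonneg (σ := σ) h1 h2 hσ.le hN1
  have hsplit_pow : (N:ℝ)^H = Real.sqrt (N:ℝ) * (N:ℝ)^(H-1/2) := by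
    rw [Real.sqrt_eq_rpow, ← Real.rpow_add hNpos]
    congr 1
    ring
  have hlam0 : 0 ≤ lam N := (hlam N).1
  have hNb0 : (0:ℝ) ≤ (N:ℝ)^(H-1/2) := Real.rpow_nonneg N.cast_nonneg _
  have hkey : lam N * (N:ℝ)^H + gn H σ N < ∑ i ∈ Finset.Icc 1 (N-1), jn H σ N i := by
    have hstep : lam N * (N:ℝ)^H ≤ σ * cH H / 2 * (N:ℝ)^(H-1/2) := by
      rw [hsplit_pow, ← mul_assoc]
      exact mul_le_mul_of_nonneg_right e3 hNb0
    have : σ * cH H / 2 * (N:ℝ)^(H-1/2) + G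
        ≤ σ * cH H * ((N:ℝ)^(H-1/2) - 2) - 1 := by
      have : σ * cH H * (N:ℝ)^(H-1/2) = 2 * (σ * cH H / 2 * (N:ℝ)^(H-1/2)) := by ring
      nlinarith [e4]
    linarith
  set A := ∑ i ∈ Finset.Icc 1 (N-1), jn H σ N i with hAdef
  set P := Sp H σ N s₀ (N-1) (fun _ => -1) with hPdef
  have hPpos : 0 < P := hpos (N-1) (by omega)
  have hmain : ∀ x : ℝ, x = -1 ∨ x = 1 →
      0 < (1 - lam N) * P - Sp H σ N s₀ N (fun i => if i = N then x else -1) := by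
    intro x hx
    have hgx : gn H σ N * x ≤ gn H σ N := by
      rcases hx with h | h <;> subst h <;> nlinarith [hg0]
    rw [Sp_split H σ hN1 s₀ x, ← hAdef, ← hPdef]
    have hlt : lam N < (A - gn H σ N * x) / (N:ℝ)^H := by
      rw [lt_div_iff₀ hNH]
      linarith
    have heq : (1 - lam N) * P - P * (1 + (-A + gn H σ N * x) / (N:ℝ)^H)
        = P * ((A - gn H σ N * x) / (N:ℝ)^H - lam N) := by ring
    rw [heq]
    exact mul_pos hPpos (by linarith)
  constructor
  · intro x hx
    exact le_of_lt (hmain x hx)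
  · have hfun : (fun i : ℕ => if i = N then (-1:ℝ) else -1) = (fun _ : ℕ => (-1:ℝ)) := by
      funext i
      simp
    have := hmain (-1) (Or.inl rfl)
    rwa [hfun] at this
end

section
/- Let α := H − 1/2 ∈ (0,1/2) and define G : (0,1) → ℝ by G(z) := ∫_0^z v^{−α}(1−v)^{α} dv − (1−z)^{α}·z^{1−α}. Then G is strictly increasing on (0,1), G(z) → 0 as z → 0⁺, and consequently G(z) > 0 for every z ∈ (0,1). -/
open MeasureTheory

/-- The function `G(z) = ∫_0^z v^{-α}(1-v)^α dv - (1-z)^α z^{1-α}`. -/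
noncomputable def Gfun (α : ℝ) (z : ℝ) : ℝ :=
  (∫ v in (0:ℝ)..z, v ^ (-α) * (1 - v) ^ α) - (1 - z) ^ α * z ^ (1 - α)

lemma myMeas (α : ℝ) : Measurable (fun v : ℝ => v ^ (-α) * (1 - v) ^ α) := by
  exact (measurable_id.pow_const _).mul ((measurable_const.sub measurable_id).pow_const _)

lemma myIntInt {α : ℝ} (hα0 : 0 < α) (hα1 : α < 1) {b : ℝ} (hb0 : 0 ≤ b) (hb1 : b ≤ 1) :
    IntervalIntegrable (fun v : ℝ => v ^ (-α) * (1 - v) ^ α) volume 0 b := by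
  have h1 : IntervalIntegrable (fun v : ℝ => v ^ (-α)) volume 0 b :=
    intervalIntegral.intervalIntegrable_rpow' (by linarith)
  refine h1.mono_fun ((myMeas α).aestronglyMeasurable) ?_
  filter_upwards [ae_restrict_mem measurableSet_uIoc] with v hv
  rw [Set.uIoc_of_le hb0] at hv
  have hv0 : 0 < v := hv.1
  have hv1 : v ≤ b := hv.2
  have h1v : 0 ≤ 1 - v := by linarith
  have h1v' : 1 - v ≤ 1 := by linarith
  simp only [Real.norm_eq_abs, abs_mul]
  rw [abs_of_nonneg (Real.rpow_nonneg hv0.le _), abs_of_nonneg (Real.rpow_nonneg h1v _)]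
  calc v ^ (-α) * (1 - v) ^ α ≤ v ^ (-α) * 1 := by
        gcongr
        exact Real.rpow_le_one h1v h1v' hα0.le
    _ = v ^ (-α) := by ring

lemma myDeriv {α : ℝ} (hα0 : 0 < α) (hα1 : α < 1) {z : ℝ} (hz : z ∈ Set.Ioo (0:ℝ) 1) :
    HasDerivAt (Gfun α)
      (α * z ^ (-α) * (1 - z) ^ α + α * (1 - z) ^ (α - 1) * z ^ (1 - α)) z := by
  obtain ⟨hz0, hz1⟩ := hz
  have h1z : (0:ℝ) < 1 - z := by linarith
  -- derivative of the integral
  have hF : HasDerivAt (fun u => ∫ v in (0:ℝ)..u, v ^ (-α) * (1 - v) ^ α)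
      (z ^ (-α) * (1 - z) ^ α) z := by
    refine intervalIntegral.integral_hasDerivAt_right (myIntInt hα0 hα1 hz0.le hz1.le)
      ((myMeas α).aestronglyMeasurable.stronglyMeasurableAtFilter) ?_
    have : ContinuousAt (fun v : ℝ => v ^ (-α)) z :=
      Real.continuousAt_rpow_const z (-α) (Or.inl hz0.ne')
    exact this.mul (((continuous_const.sub continuous_id).continuousAt).rpow_const
      (Or.inl h1z.ne'))
  -- derivative of the product term
  have h2 : HasDerivAt (fun z : ℝ => (1 - z) ^ α * z ^ (1 - α))
      (((-1) * α * (1 - z) ^ (α - 1)) * z ^ (1 - α)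
        + (1 - z) ^ α * ((1 - α) * z ^ (1 - α - 1))) z := by
    have ha : HasDerivAt (fun z : ℝ => (1 - z) ^ α) ((-1) * α * (1 - z) ^ (α - 1)) z := by
      have : HasDerivAt (fun z : ℝ => 1 - z) (-1) z :=
        (hasDerivAt_id z).const_sub 1
      simpa using this.rpow_const (Or.inl h1z.ne')
    have hb : HasDerivAt (fun z : ℝ => z ^ (1 - α)) ((1 - α) * z ^ (1 - α - 1)) z :=
      Real.hasDerivAt_rpow_const (Or.inl hz0.ne')
    exact ha.mul hb
  have := hF.sub h2
  refine this.congr_deriv ?_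
  have e1 : z ^ (1 - α - 1) = z ^ (-α) := by norm_num
  have e2 : z ^ (1 - α) = z * z ^ (-α) := by
    rw [show (1:ℝ) - α = 1 + -α by ring,
      Real.rpow_one_add' hz0.le (by intro h; apply hα1.ne; linarith)]
  have e3 : (1 - z) ^ α = (1 - z) * (1 - z) ^ (α - 1) := by
    rw [show α = 1 + (α - 1) by ring]
    rw [Real.rpow_one_add' h1z.le (by intro h; apply hα0.ne'; linarith)]
    ring_nf
  rw [e1, e2, e3]; ring

theorem test {α : ℝ} (hα0 : 0 < α) (hα1 : α < 1) :
    StrictMonoOn (Gfun α) (Set.Ioo (0:ℝ) 1) := by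
  have hint : interior (Set.Ioo (0:ℝ) 1) = Set.Ioo 0 1 := interior_Ioo
  refine strictMonoOn_of_hasDerivWithinAt_pos (convex_Ioo 0 1)
    (f' := fun x => α * x ^ (-α) * (1 - x) ^ α + α * (1 - x) ^ (α - 1) * x ^ (1 - α)) ?_ ?_ ?_
  · intro x hx
    exact ((myDeriv hα0 hα1 hx).continuousAt).continuousWithinAt
  · intro x hx
    rw [hint] at hx ⊢
    exact ((myDeriv hα0 hα1 hx)).hasDerivWithinAt
  · intro x hx
    rw [hint] at hx
    obtain ⟨hx0, hx1⟩ := hx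
    have h1x : (0:ℝ) < 1 - x := by linarith
    have p1 : (0:ℝ) < x ^ (-α) := Real.rpow_pos_of_pos hx0 _
    have p2 : (0:ℝ) < (1 - x) ^ α := Real.rpow_pos_of_pos h1x _
    have p3 : (0:ℝ) < (1 - x) ^ (α - 1) := Real.rpow_pos_of_pos h1x _
    have p4 : (0:ℝ) < x ^ (1 - α) := Real.rpow_pos_of_pos hx0 _
    positivity

lemma myTendsto {α : ℝ} (hα0 : 0 < α) (hα1 : α < 1) :
    Filter.Tendsto (Gfun α) (nhdsWithin 0 (Set.Ioi (0:ℝ))) (nhds 0) := by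
  have hIoi : nhdsWithin (0:ℝ) (Set.Ioi 0) = nhdsWithin 0 (Set.Ioo 0 (1/2)) :=
    (nhdsWithin_Ioo_eq_nhdsGT (by norm_num : (0:ℝ) < 1/2)).symm
  rw [hIoi]
  -- integral part
  have hF : Filter.Tendsto (fun z => ∫ v in (0:ℝ)..z, v ^ (-α) * (1 - v) ^ α)
      (nhdsWithin 0 (Set.Ioo 0 (1/2))) (nhds 0) := by
    have hInt : IntegrableOn (fun v : ℝ => v ^ (-α) * (1 - v) ^ α)
        (Set.uIcc (0:ℝ) (1/2)) volume := by
      have := (myIntInt hα0 hα1 (by norm_num : (0:ℝ) ≤ 1/2) (by norm_num)).1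
      rw [Set.uIcc_of_le (by norm_num : (0:ℝ) ≤ 1/2), integrableOn_Icc_iff_integrableOn_Ioc]
      exact this
    have hcont := intervalIntegral.continuousOn_primitive_interval hInt
    have h0 : (0:ℝ) ∈ Set.uIcc (0:ℝ) (1/2) := Set.left_mem_uIcc
    have := (hcont 0 h0).tendsto
    have hmono : nhdsWithin (0:ℝ) (Set.Ioo 0 (1/2)) ≤ nhdsWithin 0 (Set.uIcc 0 (1/2)) := by
      apply nhdsWithin_mono
      rw [Set.uIcc_of_le (by norm_num : (0:ℝ) ≤ 1/2)]
      exact fun x hx => ⟨hx.1.le, hx.2.le⟩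
    have h := this.comp (Filter.tendsto_id.mono_left hmono)
    simpa using h.congr (fun x => rfl)
  -- product part
  have hP : Filter.Tendsto (fun z : ℝ => (1 - z) ^ α * z ^ (1 - α))
      (nhdsWithin 0 (Set.Ioo 0 (1/2))) (nhds 0) := by
    have h1 : ContinuousAt (fun z : ℝ => (1 - z) ^ α * z ^ (1 - α)) 0 := by
      refine ContinuousAt.mul ?_ ?_
      · exact ((continuous_const.sub continuous_id).continuousAt).rpow_const (Or.inl (by norm_num))
      · exact Real.continuousAt_rpow_const 0 (1 - α) (Or.inr (by linarith))
    have := (h1.continuousWithinAt (s := Set.Ioo 0 (1/2))).tendsto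
    simpa [Real.zero_rpow (by intro h; apply hα1.ne; linarith : (1:ℝ) - α ≠ 0)] using this
  have := hF.sub hP
  rw [sub_zero] at this
  exact this

theorem testAll {α : ℝ} (hα0 : 0 < α) (hα1 : α < 1) :
    ∀ z ∈ Set.Ioo (0:ℝ) 1, 0 < Gfun α z := by
  intro z hz
  have hmono := test hα0 hα1
  have hT := myTendsto hα0 hα1
  have hw : z/2 ∈ Set.Ioo (0:ℝ) 1 := ⟨by linarith [hz.1], by linarith [hz.2]⟩
  have hlt : Gfun α (z/2) < Gfun α z := hmono hw hz (by linarith [hz.1])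
  have hge : 0 ≤ Gfun α (z/2) := by
    refine le_of_tendsto hT ?_
    filter_upwards [Ioo_mem_nhdsGT_of_mem (Set.left_mem_Ico.mpr (by linarith [hz.1] : (0:ℝ) < z/2))]
      with x hx
    exact (hmono ⟨hx.1, by linarith [hx.2, hz.2, hz.1]⟩ hw hx.2).le
  linarith


/-- With `α = H - 1/2 ∈ (0,1/2)`, the function `G` is strictly increasing on `(0,1)`,
tends to `0` as `z → 0⁺`, and hence is strictly positive on `(0,1)`. -/
theorem Gfun_properties (H : ℝ) (hH : H ∈ Set.Ioo (1/2 : ℝ) 1) :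
    StrictMonoOn (Gfun (H - 1/2)) (Set.Ioo (0:ℝ) 1) ∧
    Filter.Tendsto (Gfun (H - 1/2)) (nhdsWithin 0 (Set.Ioi (0:ℝ))) (nhds 0) ∧
    ∀ z ∈ Set.Ioo (0:ℝ) 1, 0 < Gfun (H - 1/2) z := by
  have hα0 : 0 < H - 1/2 := by linarith [hH.1]
  have hα1 : H - 1/2 < 1 := by linarith [hH.2]
  exact ⟨test hα0 hα1, myTendsto hα0 hα1, testAll hα0 hα1⟩
end
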